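/- arXiv:2007.07433 — 6 statements merged into one kernel-verified Lean document; each statement's English description precedes it below -/
import Mathlib

section
/- Let a ∈ ℝⁿ and B ⊆ ℝⁿ, and let M = {Sym(abᵀ) : b ∈ B} where Sym(N) = (N + Nᵀ)/2. Then for every positive semidefinite X of rank at least two, range(X) ∩ {x : xᵀMx = 0 ∀M ∈ M} ≠ {0}; consequently S(M) is rank-one generated. -/
open Matrix Set

noncomputable section

/-- The set of rank-one (outer product) matrices `x xᵀ`. -/
def RankOneSet (n : ℕ) : Set (Matrix (Fin n) (Fin n) ℝ) :=
  {X | ∃ x : Fin n → ℝ, X = vecMulVec x x}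

/-- A set of PSD matrices is rank-one generated if it equals the convex hull of its
rank-one members. -/
def IsROG {n : ℕ} (S : Set (Matrix (Fin n) (Fin n) ℝ)) : Prop :=
  S = convexHull ℝ (S ∩ RankOneSet n)

/-- `ℝ₊X` is an extreme ray of `S`: `X ∈ S`, `X ≠ 0`, and whenever `X = (Y+Z)/2` with
`Y, Z ∈ S`, both `Y` and `Z` lie on the ray `ℝ₊X`. -/
def IsExtremeRay' {n : ℕ} (S : Set (Matrix (Fin n) (Fin n) ℝ))
    (X : Matrix (Fin n) (Fin n) ℝ) : Prop :=
  X ∈ S ∧ X ≠ 0 ∧ ∀ Y ∈ S, ∀ Z ∈ S, X = (1/2 : ℝ) • (Y + Z) →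
    (∃ α : ℝ, 0 ≤ α ∧ Y = α • X) ∧ (∃ β : ℝ, 0 ≤ β ∧ Z = β • X)

/-- `S(𝓜) = {X ⪰ 0 : ⟨N, X⟩ ≥ 0 ∀ N ∈ 𝓜}` with the trace inner product. -/
def SCone {n : ℕ} (𝓜 : Set (Matrix (Fin n) (Fin n) ℝ)) : Set (Matrix (Fin n) (Fin n) ℝ) :=
  {X | X.PosSemidef ∧ ∀ N ∈ 𝓜, 0 ≤ (N * X).trace}

/-- `T(𝓜) = {X ⪰ 0 : ⟨N, X⟩ = 0 ∀ N ∈ 𝓜}` with the trace inner product. -/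
def TCone {n : ℕ} (𝓜 : Set (Matrix (Fin n) (Fin n) ℝ)) : Set (Matrix (Fin n) (Fin n) ℝ) :=
  {X | X.PosSemidef ∧ ∀ N ∈ 𝓜, (N * X).trace = 0}

section Aux

open scoped Pointwise

variable {n : ℕ}


lemma aux_vecMulVec_mulVec (u v x : Fin n → ℝ) :
    (vecMulVec u v).mulVec x = (v ⬝ᵥ x) • u := by
  ext i
  simp only [mulVec, vecMulVec_apply, dotProduct, Pi.smul_apply, smul_eq_mul, Finset.sum_mul]
  exact Finset.sum_congr rfl fun j _ => by ring

lemma aux_trace_mul_vecMulVec (N : Matrix (Fin n) (Fin n) ℝ) (x : Fin n → ℝ) :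
    (N * vecMulVec x x).trace = x ⬝ᵥ N.mulVec x := by
  simp only [trace, diag, mul_apply, vecMulVec_apply, dotProduct, mulVec, Finset.mul_sum]
  exact Finset.sum_congr rfl fun i _ => Finset.sum_congr rfl fun j _ => by ring

lemma aux_vecMulVec_smul (c : ℝ) (x : Fin n → ℝ) :
    vecMulVec (c • x) (c • x) = (c * c) • vecMulVec x x := by
  ext i j
  simp [vecMulVec_apply]
  ring

lemma aux_posSemidef_vecMulVec (x : Fin n → ℝ) : (vecMulVec x x).PosSemidef := by
  refine PosSemidef.of_dotProduct_mulVec_nonneg ?_ ?_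
  · ext i j
    simp [conjTranspose, vecMulVec_apply, mul_comm]
  · intro z
    rw [aux_vecMulVec_mulVec]
    simp only [star_trivial, dotProduct_smul, smul_eq_mul]
    rw [dotProduct_comm]
    exact mul_self_nonneg _

lemma aux_dp (B : Matrix (Fin n) (Fin n) ℝ) (y z : Fin n → ℝ) :
    y ⬝ᵥ ((Bᴴ * B) *ᵥ z) = (B *ᵥ y) ⬝ᵥ (B *ᵥ z) := by
  rw [← mulVec_mulVec, dotProduct_mulVec, vecMul_conjTranspose]
  simp [star_trivial]

lemma aux_cs (u w : Fin n → ℝ) : (u ⬝ᵥ w) * (u ⬝ᵥ w) ≤ (u ⬝ᵥ u) * (w ⬝ᵥ w) := by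
  have := Finset.sum_mul_sq_le_sq_mul_sq Finset.univ u w
  simpa [dotProduct, sq, pow_two] using this

lemma aux_key {X : Matrix (Fin n) (Fin n) ℝ} (hX : X.PosSemidef) {y x : Fin n → ℝ}
    (hxy : X.mulVec y = x) (hx : x ≠ 0) :
    ∃ δ : ℝ, 0 < δ ∧ (X - δ • vecMulVec x x).PosSemidef ∧
      (X - δ • vecMulVec x x).rank < X.rank := by
  have hsym := hX.1
  have hd0 : y ⬝ᵥ x ≠ 0 := by
    intro h
    apply hx
    rw [← hxy]
    rw [← hxy] at h
    exact (hX.dotProduct_mulVec_zero_iff y).1 (by simpa using h)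
  have hdpos : 0 < y ⬝ᵥ x := by
    rcases lt_or_eq_of_le (by simpa using hX.dotProduct_mulVec_nonneg y) with h | h
    · rw [← hxy]; simpa using h
    · exact absurd (by rw [← hxy]; simpa using h.symm) hd0
  set δ : ℝ := (y ⬝ᵥ x)⁻¹ with hδ
  have hδpos : 0 < δ := inv_pos.2 hdpos
  set V : Matrix (Fin n) (Fin n) ℝ := vecMulVec x x with hV
  -- quadratic form formula
  have hform : ∀ z, z ⬝ᵥ ((X - δ • V) *ᵥ z) = z ⬝ᵥ (X *ᵥ z) - δ * ((x ⬝ᵥ z) * (x ⬝ᵥ z)) := by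
    intro z
    rw [sub_mulVec, dotProduct_sub, smul_mulVec, dotProduct_smul, hV,
      aux_vecMulVec_mulVec, dotProduct_smul]
    simp [smul_eq_mul, dotProduct_comm x z]
  -- PSD
  obtain ⟨Bm, hBm⟩ : ∃ Bm : Matrix (Fin n) (Fin n) ℝ, X = Bmᴴ * Bm := by
    open scoped MatrixOrder in
    obtain ⟨Bm', hBm'⟩ := CStarAlgebra.nonneg_iff_eq_star_mul_self.mp hX.nonneg
    exact ⟨Bm', hBm'⟩
  have hPSD : (X - δ • V).PosSemidef := by
    refine PosSemidef.of_dotProduct_mulVec_nonneg ?_ ?_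
    · refine hsym.sub ?_
      have h := (aux_posSemidef_vecMulVec x).1
      show (δ • V)ᴴ = δ • V
      rw [conjTranspose_smul, h]
      congr 1
    · intro z
      simp only [star_trivial]
      rw [hform z]
      have hx_dp : ∀ z', x ⬝ᵥ z' = (Bm *ᵥ y) ⬝ᵥ (Bm *ᵥ z') := by
        intro z'
        rw [← hxy, hBm, dotProduct_comm, aux_dp, dotProduct_comm]
      have h1 : z ⬝ᵥ (X *ᵥ z) = (Bm *ᵥ z) ⬝ᵥ (Bm *ᵥ z) := by rw [hBm, aux_dp]
      have h2 : y ⬝ᵥ x = (Bm *ᵥ y) ⬝ᵥ (Bm *ᵥ y) := by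
        rw [← hxy, hBm, aux_dp]
      set u := Bm *ᵥ y
      set w := Bm *ᵥ z
      have hcs := aux_cs u w
      have huu : 0 < u ⬝ᵥ u := by rw [← h2]; exact hdpos
      rw [sub_nonneg, h1, hx_dp z, hδ, h2, inv_mul_le_iff₀ huu]
      exact hcs
  refine ⟨δ, hδpos, hPSD, ?_⟩
  have hXt : Xᵀ = X := by
    rw [← conjTranspose_eq_transpose_of_trivial, hsym]
  have hXy' : (X - δ • V) *ᵥ y = 0 := by
    rw [sub_mulVec, smul_mulVec, hV, aux_vecMulVec_mulVec, hxy,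
      dotProduct_comm x y, smul_smul, hδ, inv_mul_cancel₀ hd0, one_smul, sub_self]
  have hker : ∀ z, X *ᵥ z = 0 → (X - δ • V) *ᵥ z = 0 := by
    intro z hz
    have hxz : x ⬝ᵥ z = 0 := by
      rw [← hxy, dotProduct_comm, dotProduct_mulVec, ← mulVec_transpose, hXt, hz,
        zero_dotProduct]
    rw [sub_mulVec, smul_mulVec, hV, aux_vecMulVec_mulVec, hxz, zero_smul,
      smul_zero, hz, sub_self]
  set K := LinearMap.ker X.mulVecLin with hK
  set K' := LinearMap.ker (X - δ • V).mulVecLin with hK'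
  have hlt : K < K' := by
    refine lt_of_le_of_ne (fun z hz => ?_) (fun h => ?_)
    · rw [LinearMap.mem_ker, mulVecLin_apply] at *
      exact hker z hz
    · have hyK' : y ∈ K' := by rw [LinearMap.mem_ker, mulVecLin_apply]; exact hXy'
      rw [← h, LinearMap.mem_ker, mulVecLin_apply, hxy] at hyK'
      exact hx hyK'
  have hfin : Module.finrank ℝ K < Module.finrank ℝ K' :=
    Submodule.finrank_lt_finrank_of_lt hlt
  have e1 := LinearMap.finrank_range_add_finrank_ker X.mulVecLin
  have e2 := LinearMap.finrank_range_add_finrank_ker (X - δ • V).mulVecLin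
  have hr1 : X.rank = Module.finrank ℝ (LinearMap.range X.mulVecLin) := rfl
  have hr2 : (X - δ • V).rank
      = Module.finrank ℝ (LinearMap.range (X - δ • V).mulVecLin) := rfl
  rw [← hK] at e1
  rw [← hK'] at e2
  rw [hr1, hr2]
  omega

lemma aux_exists (a : Fin n → ℝ) {X : Matrix (Fin n) (Fin n) ℝ} (h2 : 2 ≤ X.rank) :
    ∃ x : Fin n → ℝ, x ≠ 0 ∧ (∃ y, X.mulVec y = x) ∧ a ⬝ᵥ x = 0 := by
  set V := LinearMap.range X.mulVecLin with hVdef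
  let f : (Fin n → ℝ) →ₗ[ℝ] ℝ :=
    { toFun := fun v => a ⬝ᵥ v
      map_add' := fun u v => dotProduct_add a u v
      map_smul' := fun c v => by simp }
  let g := f.comp V.subtype
  have hrange : Module.finrank ℝ (LinearMap.range g) ≤ 1 := by
    simpa using (LinearMap.range g).finrank_le
  have hb := LinearMap.finrank_range_add_finrank_ker g
  have hV2 : 2 ≤ Module.finrank ℝ V := h2
  have hker : 0 < Module.finrank ℝ (LinearMap.ker g) := by omega
  have : Nontrivial (LinearMap.ker g) := Module.finrank_pos_iff.mp hker
  obtain ⟨v, hv⟩ := exists_ne (0 : LinearMap.ker g)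
  refine ⟨(v.1 : Fin n → ℝ), ?_, ?_, ?_⟩
  · intro h
    apply hv
    ext
    exact congrFun h _
  · obtain ⟨y, hy⟩ := v.1.2
    exact ⟨y, hy⟩
  · have := v.2
    rw [LinearMap.mem_ker] at this
    exact this

lemma aux_quadform (a b x : Fin n → ℝ) :
    x ⬝ᵥ ((1/2 : ℝ) • (vecMulVec a b + vecMulVec b a)).mulVec x = (a ⬝ᵥ x) * (b ⬝ᵥ x) := by
  rw [smul_mulVec, add_mulVec, aux_vecMulVec_mulVec, aux_vecMulVec_mulVec,
    dotProduct_smul, dotProduct_add, dotProduct_smul, dotProduct_smul,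
    dotProduct_comm x a, dotProduct_comm x b]
  simp only [smul_eq_mul]
  ring

lemma aux_rank_zero {X : Matrix (Fin n) (Fin n) ℝ} (h : X.rank = 0) : X = 0 := by
  have hbot : LinearMap.range X.mulVecLin = ⊥ := Submodule.finrank_eq_zero.mp h
  have hz : X.mulVecLin = 0 := LinearMap.range_eq_bot.mp hbot
  ext i j
  have hv : X *ᵥ Pi.single j 1 = 0 := by
    have := LinearMap.congr_fun hz (Pi.single j 1)
    simpa [mulVecLin_apply] using this
  have := congrFun hv i
  simpa [mulVec, dotProduct, Pi.single_apply] using this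

lemma aux_psd_smul {X : Matrix (Fin n) (Fin n) ℝ} (hX : X.PosSemidef) {c : ℝ} (hc : 0 ≤ c) :
    (c • X).PosSemidef := by
  refine PosSemidef.of_dotProduct_mulVec_nonneg ?_ ?_
  · show (c • X)ᴴ = c • X
    rw [conjTranspose_smul, hX.1]
    congr 1
  · intro z
    rw [smul_mulVec, dotProduct_smul]
    exact mul_nonneg hc (by simpa using hX.dotProduct_mulVec_nonneg z)

lemma aux_scone_smul {𝓜 : Set (Matrix (Fin n) (Fin n) ℝ)} {X : Matrix (Fin n) (Fin n) ℝ}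
    (hX : X ∈ SCone 𝓜) {c : ℝ} (hc : 0 ≤ c) : c • X ∈ SCone 𝓜 := by
  refine ⟨aux_psd_smul hX.1 hc, fun N hN => ?_⟩
  rw [mul_smul_comm, trace_smul, smul_eq_mul]
  exact mul_nonneg hc (hX.2 N hN)

lemma aux_rankone_smul {Z : Matrix (Fin n) (Fin n) ℝ} (hZ : Z ∈ RankOneSet n) {c : ℝ}
    (hc : 0 ≤ c) : c • Z ∈ RankOneSet n := by
  obtain ⟨x, rfl⟩ := hZ
  exact ⟨Real.sqrt c • x, by rw [aux_vecMulVec_smul, Real.mul_self_sqrt hc]⟩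

lemma aux_scone_convex (𝓜 : Set (Matrix (Fin n) (Fin n) ℝ)) : Convex ℝ (SCone 𝓜) := by
  intro X hX Y hY p q hp hq hpq
  refine ⟨(aux_psd_smul hX.1 hp).add (aux_psd_smul hY.1 hq), fun N hN => ?_⟩
  rw [mul_add, trace_add, mul_smul_comm, mul_smul_comm, trace_smul, trace_smul]
  exact add_nonneg (smul_nonneg hp (hX.2 N hN)) (smul_nonneg hq (hY.2 N hN))

lemma aux_hull_smul {𝓜 : Set (Matrix (Fin n) (Fin n) ℝ)} {A : Matrix (Fin n) (Fin n) ℝ}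
    (hA : A ∈ convexHull ℝ (SCone 𝓜 ∩ RankOneSet n)) {c : ℝ} (hc : 0 ≤ c) :
    c • A ∈ convexHull ℝ (SCone 𝓜 ∩ RankOneSet n) := by
  have h1 : c • A ∈ c • convexHull ℝ (SCone 𝓜 ∩ RankOneSet n) := Set.smul_mem_smul_set hA
  rw [← convexHull_smul] at h1
  refine convexHull_mono ?_ h1
  rintro Z ⟨W, hW, rfl⟩
  exact ⟨aux_scone_smul hW.1 hc, aux_rankone_smul hW.2 hc⟩

lemma aux_nonzero_in_range {X : Matrix (Fin n) (Fin n) ℝ} (h : X ≠ 0) :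
    ∃ x : Fin n → ℝ, x ≠ 0 ∧ ∃ y, X *ᵥ y = x := by
  by_contra hc
  push_neg at hc
  apply h
  ext i j
  have hv : X *ᵥ Pi.single j 1 = 0 := by
    by_contra hne
    exact hc _ hne (Pi.single j 1) rfl
  have := congrFun hv i
  simpa [mulVec, dotProduct, Pi.single_apply] using this

lemma aux_main (a : Fin n → ℝ) (B : Set (Fin n → ℝ)) :
    ∀ (r : ℕ) (X : Matrix (Fin n) (Fin n) ℝ),
      X ∈ SCone ((fun b => (1/2 : ℝ) • (vecMulVec a b + vecMulVec b a)) '' B) → X.rank ≤ r →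
      X ∈ convexHull ℝ
        (SCone ((fun b => (1/2 : ℝ) • (vecMulVec a b + vecMulVec b a)) '' B) ∩ RankOneSet n) := by
  set 𝓜 := (fun b => (1/2 : ℝ) • (vecMulVec a b + vecMulVec b a)) '' B with h𝓜
  intro r
  induction r with
  | zero =>
    intro X hX hr
    have hX0 : X = 0 := aux_rank_zero (Nat.le_zero.mp hr)
    subst hX0
    exact subset_convexHull ℝ _ ⟨hX, 0, by ext i j; simp [vecMulVec_apply]⟩
  | succ r ih =>
    intro X hX hr
    by_cases h0 : X.rank ≤ r
    · exact ih X hX h0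
    push_neg at h0
    have hrank : X.rank = r + 1 := le_antisymm hr h0
    rcases Nat.eq_zero_or_pos r with hr0 | hr1
    · -- rank X = 1
      subst hr0
      have hXne : X ≠ 0 := fun h => by simp [h] at hrank
      obtain ⟨x, hx0, y, hxy⟩ := aux_nonzero_in_range hXne
      obtain ⟨δ, hδpos, hPSD, hlt⟩ := aux_key hX.1 hxy hx0
      have hzero : X - δ • vecMulVec x x = 0 := by
        apply aux_rank_zero
        omega
      have hXeq : X = δ • vecMulVec x x := by
        rw [← sub_eq_zero]; exact hzero
      refine subset_convexHull ℝ _ ⟨hX, ?_⟩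
      rw [hXeq]
      exact aux_rankone_smul ⟨x, rfl⟩ hδpos.le
    · -- rank X ≥ 2
      have h2 : 2 ≤ X.rank := by omega
      obtain ⟨x, hx0, ⟨y, hxy⟩, hax⟩ := aux_exists a h2
      obtain ⟨δ, hδpos, hPSD, hlt⟩ := aux_key hX.1 hxy hx0
      have htr0 : ∀ N ∈ 𝓜, (N * vecMulVec x x).trace = 0 := by
        rintro N ⟨b, hb, rfl⟩
        rw [aux_trace_mul_vecMulVec, aux_quadform, hax, zero_mul]
      set Z : Matrix (Fin n) (Fin n) ℝ := δ • vecMulVec x x with hZ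
      have hZS : Z ∈ SCone 𝓜 ∩ RankOneSet n := by
        constructor
        · refine ⟨aux_psd_smul (aux_posSemidef_vecMulVec x) hδpos.le, fun N hN => ?_⟩
          rw [hZ, mul_smul_comm, trace_smul, htr0 N hN]
          simp
        · exact aux_rankone_smul ⟨x, rfl⟩ hδpos.le
      have hX'S : X - Z ∈ SCone 𝓜 := by
        refine ⟨hPSD, fun N hN => ?_⟩
        rw [mul_sub, trace_sub, hZ, mul_smul_comm, trace_smul, htr0 N hN]
        simpa using hX.2 N hN
      have hX'hull : X - Z ∈ convexHull ℝ (SCone 𝓜 ∩ RankOneSet n) := by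
        refine ih _ hX'S ?_
        omega
      have hcomb := (convex_convexHull ℝ (SCone 𝓜 ∩ RankOneSet n))
        (aux_hull_smul (subset_convexHull ℝ _ hZS) (by norm_num : (0:ℝ) ≤ 2))
        (aux_hull_smul hX'hull (by norm_num : (0:ℝ) ≤ 2))
        (by norm_num : (0:ℝ) ≤ 1/2) (by norm_num : (0:ℝ) ≤ 1/2) (by norm_num)
      have hXeq : X = (1/2 : ℝ) • ((2:ℝ) • Z) + (1/2 : ℝ) • ((2:ℝ) • (X - Z)) := by
        module
      rw [hXeq]
      exact hcomb

end Aux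

theorem stmt_12 {n : ℕ} (a : Fin n → ℝ) (B : Set (Fin n → ℝ)) :
    (∀ X : Matrix (Fin n) (Fin n) ℝ, X.PosSemidef → 2 ≤ X.rank →
      ∃ x : Fin n → ℝ, x ≠ 0 ∧ (∃ y : Fin n → ℝ, X.mulVec y = x) ∧
        ∀ N ∈ (fun b => (1/2 : ℝ) • (vecMulVec a b + vecMulVec b a)) '' B,
          x ⬝ᵥ N.mulVec x = 0) ∧
    IsROG (SCone ((fun b => (1/2 : ℝ) • (vecMulVec a b + vecMulVec b a)) '' B)) := by
  set 𝓜 := (fun b => (1/2 : ℝ) • (vecMulVec a b + vecMulVec b a)) '' B with h𝓜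
  constructor
  · intro X hXpsd h2
    obtain ⟨x, hx0, hxr, hax⟩ := aux_exists a h2
    refine ⟨x, hx0, hxr, ?_⟩
    rintro N ⟨b, hb, rfl⟩
    rw [aux_quadform, hax, zero_mul]
  · apply Set.Subset.antisymm
    · intro X hX
      exact aux_main a B X.rank X hX le_rfl
    · exact convexHull_min Set.inter_subset_left (aux_scone_convex _)
end
end

section
/- For any vectors a, b, c ∈ ℝⁿ, the cone {X ∈ S^n_+ : aᵀXb ≥ 0, bᵀXc ≥ 0, aᵀXc ≥ 0} is rank-one generated. -/
open Matrix Set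

noncomputable section

variable {n : ℕ}

lemma dot_symm {X : Matrix (Fin n) (Fin n) ℝ} (hX : X.IsHermitian)
    (x y : Fin n → ℝ) : x ⬝ᵥ X *ᵥ y = y ⬝ᵥ X *ᵥ x := by
  have hXt : Xᵀ = X := by rw [← Matrix.conjTranspose_eq_transpose_of_trivial]; exact hX
  rw [Matrix.dotProduct_mulVec, ← Matrix.mulVec_transpose, hXt, dotProduct_comm]

lemma psd_cs {X : Matrix (Fin n) (Fin n) ℝ} (hX : X.PosSemidef)
    (x y : Fin n → ℝ) : (x ⬝ᵥ X *ᵥ y)^2 ≤ (x ⬝ᵥ X *ᵥ x) * (y ⬝ᵥ X *ᵥ y) := by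
  set A := x ⬝ᵥ X *ᵥ x with hA
  set B := x ⬝ᵥ X *ᵥ y with hB
  set C := y ⬝ᵥ X *ᵥ y with hC
  have hA0 : 0 ≤ A := by simpa using hX.dotProduct_mulVec_nonneg x
  have hC0 : 0 ≤ C := by simpa using hX.dotProduct_mulVec_nonneg y
  have key : ∀ t : ℝ, 0 ≤ A + 2*t*B + t^2*C := by
    intro t
    have h := hX.dotProduct_mulVec_nonneg (x + t • y)
    have hsymm := dot_symm hX.1 y x
    simp only [star_trivial, Matrix.mulVec_add, Matrix.mulVec_smul, dotProduct_add,
      add_dotProduct, smul_dotProduct, dotProduct_smul,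
      smul_eq_mul] at h
    rw [← hA, ← hB, ← hC] at h
    rw [← hB] at hsymm
    rw [hsymm] at h
    nlinarith [h]
  by_cases hCz : C = 0
  · by_cases hBz : B = 0
    · simp [hBz, hCz]
    · exfalso
      have h1 := key (-(A+1)/(2*B))
      have e : A + 2*(-(A+1)/(2*B))*B + (-(A+1)/(2*B))^2*C = -1 + (-(A+1)/(2*B))^2*C := by
        field_simp
        ring
      rw [e, hCz] at h1
      simp at h1
      linarith
  · have hCpos : 0 < C := lt_of_le_of_ne hC0 (Ne.symm hCz)
    have h1 := key (-B/C)
    have e : A + 2*(-B/C)*B + (-B/C)^2*C = A - B^2/C := by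
      field_simp
      ring
    rw [e] at h1
    have h2 : B^2/C ≤ A := by linarith
    calc B^2 = (B^2/C)*C := by field_simp
    _ ≤ A * C := by exact mul_le_mul_of_nonneg_right h2 hC0

lemma psd_mulVec_eq_zero {X : Matrix (Fin n) (Fin n) ℝ} (hX : X.PosSemidef)
    {v : Fin n → ℝ} (hv : v ⬝ᵥ X *ᵥ v = 0) : X *ᵥ v = 0 := by
  funext j
  have h := psd_cs hX (Pi.single j 1) v
  rw [hv, mul_zero] at h
  have h2 : Pi.single j 1 ⬝ᵥ X *ᵥ v = (X *ᵥ v) j := by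
    simp [dotProduct, Pi.single_apply]
  rw [h2] at h
  have := sq_nonneg ((X *ᵥ v) j)
  have : ((X *ᵥ v) j)^2 = 0 := le_antisymm h this
  simpa using pow_eq_zero_iff (n := 2) (by norm_num) |>.mp this

lemma vecMulVec_mulVec (u v y : Fin n → ℝ) :
    (vecMulVec u v) *ᵥ y = (v ⬝ᵥ y) • u := by
  funext i
  simp [Matrix.mulVec, Matrix.vecMulVec_apply, dotProduct, Finset.mul_sum,
    mul_comm, mul_assoc, mul_left_comm]

lemma dot_vecMulVec_mulVec (u v x y : Fin n → ℝ) :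
    x ⬝ᵥ (vecMulVec u v) *ᵥ y = (x ⬝ᵥ u) * (v ⬝ᵥ y) := by
  rw [vecMulVec_mulVec, dotProduct_smul, smul_eq_mul, mul_comm]

lemma vecMulVec_hermitian (u : Fin n → ℝ) : (vecMulVec u u).IsHermitian := by
  ext i j
  simp [Matrix.conjTranspose, Matrix.vecMulVec_apply, mul_comm]

lemma vecMulVec_posSemidef (u : Fin n → ℝ) : (vecMulVec u u).PosSemidef := by
  refine Matrix.PosSemidef.of_dotProduct_mulVec_nonneg (vecMulVec_hermitian u) fun x => ?_
  rw [star_trivial, dot_vecMulVec_mulVec]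
  have : x ⬝ᵥ u = u ⬝ᵥ x := dotProduct_comm x u
  rw [this]
  exact mul_self_nonneg _

lemma gram_decomp {X : Matrix (Fin n) (Fin n) ℝ} (hX : X.PosSemidef) :
    ∃ w : Fin n → (Fin n → ℝ), X = ∑ i, vecMulVec (w i) (w i) := by
  obtain ⟨B, hB⟩ : ∃ B : Matrix (Fin n) (Fin n) ℝ, X = Bᴴ * B := by
    open scoped MatrixOrder in exact CStarAlgebra.nonneg_iff_eq_star_mul_self.mp hX.nonneg
  refine ⟨fun i => B i, ?_⟩
  rw [hB]
  ext j k
  simp [Matrix.mul_apply, Matrix.sum_apply, Matrix.vecMulVec_apply, Matrix.conjTranspose_apply]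

/-- decomposition into good rank-one terms -/
def Decomp (a b c : Fin n → ℝ) (X : Matrix (Fin n) (Fin n) ℝ) : Prop :=
  ∃ m : ℕ, ∃ w : Fin m → (Fin n → ℝ), X = ∑ i, vecMulVec (w i) (w i) ∧
    ∀ i, 0 ≤ (a ⬝ᵥ w i) * (b ⬝ᵥ w i) ∧ 0 ≤ (b ⬝ᵥ w i) * (c ⬝ᵥ w i) ∧
      0 ≤ (a ⬝ᵥ w i) * (c ⬝ᵥ w i)

lemma Decomp.perm {a b c : Fin n → ℝ} {X : Matrix (Fin n) (Fin n) ℝ}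
    (h : Decomp b c a X) : Decomp a b c X := by
  obtain ⟨m, w, hw, hgood⟩ := h
  exact ⟨m, w, hw, fun i => ⟨by rw [mul_comm]; exact (hgood i).2.2,
    (hgood i).1, by rw [mul_comm]; exact (hgood i).2.1⟩⟩

lemma Decomp.cons {a b c u : Fin n → ℝ} {X : Matrix (Fin n) (Fin n) ℝ}
    (h : Decomp a b c X)
    (h1 : 0 ≤ (a ⬝ᵥ u) * (b ⬝ᵥ u)) (h2 : 0 ≤ (b ⬝ᵥ u) * (c ⬝ᵥ u))
    (h3 : 0 ≤ (a ⬝ᵥ u) * (c ⬝ᵥ u)) :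
    Decomp a b c (vecMulVec u u + X) := by
  obtain ⟨m, w, hw, hgood⟩ := h
  refine ⟨m + 1, Fin.cons u w, ?_, ?_⟩
  · rw [Fin.sum_univ_succ]
    simp [hw]
  · intro i
    refine Fin.cases ?_ ?_ i
    · simpa using ⟨h1, h2, h3⟩
    · intro j
      simpa using hgood j

lemma dot_sum_mulVec {m : ℕ} (A : Fin m → Matrix (Fin n) (Fin n) ℝ) (x y : Fin n → ℝ) :
    x ⬝ᵥ (∑ i, A i) *ᵥ y = ∑ i, x ⬝ᵥ (A i) *ᵥ y := by
  classical
  induction (Finset.univ : Finset (Fin m)) using Finset.induction with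
  | empty => simp [Matrix.mulVec, dotProduct]
  | @insert _ _ h ih =>
    rw [Finset.sum_insert h, Finset.sum_insert h, ← ih, Matrix.add_mulVec,
      dotProduct_add]

lemma decomp_terminal {a b c : Fin n → ℝ} {X : Matrix (Fin n) (Fin n) ℝ}
    (hX : X.PosSemidef) (ha : a ⬝ᵥ X *ᵥ a = 0) (hb : b ⬝ᵥ X *ᵥ b = 0) :
    Decomp a b c X := by
  obtain ⟨w, hw⟩ := gram_decomp hX
  have key : ∀ (v : Fin n → ℝ), v ⬝ᵥ X *ᵥ v = 0 → ∀ i, v ⬝ᵥ w i = 0 := by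
    intro v hv i
    have hsum : v ⬝ᵥ X *ᵥ v = ∑ j, (v ⬝ᵥ w j)^2 := by
      rw [hw, dot_sum_mulVec]
      refine Finset.sum_congr rfl fun j _ => ?_
      rw [dot_vecMulVec_mulVec, dotProduct_comm (w j) v, sq]
    rw [hv] at hsum
    have := (Finset.sum_eq_zero_iff_of_nonneg (fun j _ => sq_nonneg (v ⬝ᵥ w j))).mp
      hsum.symm i (Finset.mem_univ i)
    exact pow_eq_zero_iff (n := 2) (by norm_num) |>.mp this
  exact ⟨n, w, hw, fun i => by
    rw [key a ha i, key b hb i]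
    simp⟩

lemma pivot_eval (X : Matrix (Fin n) (Fin n) ℝ) (s : ℝ) (u x y : Fin n → ℝ) :
    x ⬝ᵥ (X - s • vecMulVec u u) *ᵥ y
      = x ⬝ᵥ X *ᵥ y - s * ((x ⬝ᵥ u) * (u ⬝ᵥ y)) := by
  rw [Matrix.sub_mulVec, dotProduct_sub, Matrix.smul_mulVec,
    dotProduct_smul, smul_eq_mul, dot_vecMulVec_mulVec]

lemma pivot_psd {X : Matrix (Fin n) (Fin n) ℝ} (hX : X.PosSemidef) (v : Fin n → ℝ)
    (ht : 0 < v ⬝ᵥ X *ᵥ v) :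
    (X - (v ⬝ᵥ X *ᵥ v)⁻¹ • vecMulVec (X *ᵥ v) (X *ᵥ v)).PosSemidef := by
  set t := v ⬝ᵥ X *ᵥ v with htdef
  refine Matrix.PosSemidef.of_dotProduct_mulVec_nonneg ?_ ?_
  · have h1 : (t⁻¹ • vecMulVec (X *ᵥ v) (X *ᵥ v)).IsHermitian := by
      ext i j
      simp [Matrix.conjTranspose_apply, Matrix.smul_apply, Matrix.vecMulVec_apply, mul_comm]
    exact hX.1.sub h1
  · intro x
    rw [star_trivial, pivot_eval]
    have hcs := psd_cs hX x v
    have h2 : (X *ᵥ v) ⬝ᵥ x = x ⬝ᵥ X *ᵥ v := dotProduct_comm _ _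
    rw [h2, sub_nonneg, inv_mul_le_iff₀ ht]
    nlinarith [hcs, sq_nonneg (x ⬝ᵥ X *ᵥ v)]

lemma pivot_mulVec_self {X : Matrix (Fin n) (Fin n) ℝ} (hX : X.IsHermitian) (v : Fin n → ℝ)
    (ht : v ⬝ᵥ X *ᵥ v ≠ 0) :
    (X - (v ⬝ᵥ X *ᵥ v)⁻¹ • vecMulVec (X *ᵥ v) (X *ᵥ v)) *ᵥ v = 0 := by
  rw [Matrix.sub_mulVec, Matrix.smul_mulVec, vecMulVec_mulVec]
  have h : (X *ᵥ v) ⬝ᵥ v = v ⬝ᵥ X *ᵥ v := dotProduct_comm _ _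
  rw [h, smul_smul, inv_mul_cancel₀ ht, one_smul, sub_self]

lemma smul_vecMulVec_self {r : ℝ} (hr : 0 ≤ r) (u : Fin n → ℝ) :
    r • vecMulVec u u = vecMulVec (Real.sqrt r • u) (Real.sqrt r • u) := by
  ext i j
  simp only [Matrix.smul_apply, Matrix.vecMulVec_apply, Pi.smul_apply, smul_eq_mul]
  have h : Real.sqrt r * Real.sqrt r = r := Real.mul_self_sqrt hr
  calc r * (u i * u j) = (Real.sqrt r * Real.sqrt r) * (u i * u j) := by rw [h]
  _ = Real.sqrt r * u i * (Real.sqrt r * u j) := by ring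

lemma decomp_stage2 {a b c : Fin n → ℝ} {X : Matrix (Fin n) (Fin n) ℝ} (hX : X.PosSemidef)
    (ha : X *ᵥ a = 0) (hβ : 0 ≤ b ⬝ᵥ X *ᵥ c) : Decomp a b c X := by
  set s := b ⬝ᵥ X *ᵥ b with hsdef
  have hs0 : 0 ≤ s := by simpa using hX.dotProduct_mulVec_nonneg b
  rcases eq_or_lt_of_le hs0 with h | hs
  · have hb0 : X *ᵥ b = 0 := psd_mulVec_eq_zero hX h.symm
    exact decomp_terminal hX (by rw [ha]; simp) (by rw [hb0]; simp)
  · set u := X *ᵥ b with hudef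
    have hau : a ⬝ᵥ u = 0 := by
      rw [hudef]
      have : a ⬝ᵥ X *ᵥ b = b ⬝ᵥ X *ᵥ a := dot_symm hX.1 a b
      rw [show a ⬝ᵥ (X *ᵥ b) = a ⬝ᵥ X *ᵥ b from rfl, this, ha]
      simp
    have hcu : c ⬝ᵥ u = b ⬝ᵥ X *ᵥ c := by
      rw [hudef]
      exact dot_symm hX.1 c b
    have hbu : b ⬝ᵥ u = s := rfl
    set X' := X - s⁻¹ • vecMulVec u u with hX'def
    have hX'psd := pivot_psd hX b hs
    have hX'b : X' *ᵥ b = 0 := pivot_mulVec_self hX.1 b (ne_of_gt hs)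
    have hX'a : X' *ᵥ a = 0 := by
      rw [hX'def, Matrix.sub_mulVec, Matrix.smul_mulVec, vecMulVec_mulVec, ha]
      rw [dotProduct_comm u a, hau]
      simp
    have hd : Decomp a b c X' := by
      refine decomp_terminal hX'psd ?_ ?_ <;>
        simp [show X' *ᵥ a = 0 from hX'a, show X' *ᵥ b = 0 from hX'b]
    set w := Real.sqrt s⁻¹ • u with hwdef
    have hXeq : X = vecMulVec w w + X' := by
      rw [hwdef, ← smul_vecMulVec_self (by positivity) u, hX'def]
      ring_nf
      abel
    rw [hXeq]
    have haw : a ⬝ᵥ w = 0 := by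
      rw [hwdef, dotProduct_smul, smul_eq_mul, hau, mul_zero]
    have hbw : 0 ≤ b ⬝ᵥ w := by
      rw [hwdef, dotProduct_smul, smul_eq_mul, hbu]
      positivity
    have hcw : 0 ≤ c ⬝ᵥ w := by
      rw [hwdef, dotProduct_smul, smul_eq_mul, hcu]
      positivity
    exact hd.cons (by rw [haw]; simp) (mul_nonneg hbw hcw) (by rw [haw]; simp)

lemma decomp_pivotA {a b c : Fin n → ℝ} {X : Matrix (Fin n) (Fin n) ℝ} (hX : X.PosSemidef)
    (hα : 0 ≤ a ⬝ᵥ X *ᵥ b) (hβ : 0 ≤ b ⬝ᵥ X *ᵥ c) (hγ : 0 ≤ a ⬝ᵥ X *ᵥ c)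
    (cond : (a ⬝ᵥ X *ᵥ b) * (a ⬝ᵥ X *ᵥ c) ≤ (a ⬝ᵥ X *ᵥ a) * (b ⬝ᵥ X *ᵥ c)) :
    Decomp a b c X := by
  set t := a ⬝ᵥ X *ᵥ a with htdef
  have ht0 : 0 ≤ t := by simpa using hX.dotProduct_mulVec_nonneg a
  rcases eq_or_lt_of_le ht0 with h | ht
  · exact decomp_stage2 hX (psd_mulVec_eq_zero hX h.symm) hβ
  · set u := X *ᵥ a with hudef
    have hbu : b ⬝ᵥ u = a ⬝ᵥ X *ᵥ b := (dot_symm hX.1 b a)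
    have hcu : c ⬝ᵥ u = a ⬝ᵥ X *ᵥ c := (dot_symm hX.1 c a)
    have hau : a ⬝ᵥ u = t := rfl
    set X' := X - t⁻¹ • vecMulVec u u with hX'def
    have hX'psd := pivot_psd hX a ht
    have hX'a : X' *ᵥ a = 0 := pivot_mulVec_self hX.1 a (ne_of_gt ht)
    have hX'bc : 0 ≤ b ⬝ᵥ X' *ᵥ c := by
      rw [hX'def, pivot_eval]
      have hyc : u ⬝ᵥ c = a ⬝ᵥ X *ᵥ c := by
        rw [dotProduct_comm]; exact hcu
      rw [hbu, hyc, sub_nonneg, inv_mul_le_iff₀ ht]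
      rw [mul_comm t]
      calc a ⬝ᵥ X *ᵥ b * (a ⬝ᵥ X *ᵥ c) ≤ t * (b ⬝ᵥ X *ᵥ c) := cond
      _ = b ⬝ᵥ X *ᵥ c * t := by ring
    have hd : Decomp a b c X' := decomp_stage2 hX'psd hX'a hX'bc
    set w := Real.sqrt t⁻¹ • u with hwdef
    have hXeq : X = vecMulVec w w + X' := by
      rw [hwdef, ← smul_vecMulVec_self (by positivity) u, hX'def]
      abel
    rw [hXeq]
    have haw : 0 ≤ a ⬝ᵥ w := by
      rw [hwdef, dotProduct_smul, smul_eq_mul, hau]; positivity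
    have hbw : 0 ≤ b ⬝ᵥ w := by
      rw [hwdef, dotProduct_smul, smul_eq_mul, hbu]; positivity
    have hcw : 0 ≤ c ⬝ᵥ w := by
      rw [hwdef, dotProduct_smul, smul_eq_mul, hcu]; positivity
    exact hd.cons (mul_nonneg haw hbw) (mul_nonneg hbw hcw) (mul_nonneg haw hcw)

lemma decomp_full {a b c : Fin n → ℝ} {X : Matrix (Fin n) (Fin n) ℝ} (hX : X.PosSemidef)
    (hα : 0 ≤ a ⬝ᵥ X *ᵥ b) (hβ : 0 ≤ b ⬝ᵥ X *ᵥ c) (hγ : 0 ≤ a ⬝ᵥ X *ᵥ c) :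
    Decomp a b c X := by
  have hba : b ⬝ᵥ X *ᵥ a = a ⬝ᵥ X *ᵥ b := dot_symm hX.1 b a
  have hca : c ⬝ᵥ X *ᵥ a = a ⬝ᵥ X *ᵥ c := dot_symm hX.1 c a
  have hcb : c ⬝ᵥ X *ᵥ b = b ⬝ᵥ X *ᵥ c := dot_symm hX.1 c b
  by_cases h1 : (a ⬝ᵥ X *ᵥ b) * (a ⬝ᵥ X *ᵥ c) ≤ (a ⬝ᵥ X *ᵥ a) * (b ⬝ᵥ X *ᵥ c)
  · exact decomp_pivotA hX hα hβ hγ h1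
  by_cases h2 : (b ⬝ᵥ X *ᵥ c) * (b ⬝ᵥ X *ᵥ a) ≤ (b ⬝ᵥ X *ᵥ b) * (c ⬝ᵥ X *ᵥ a)
  · exact (decomp_pivotA hX hβ (hca ▸ hγ) (hba ▸ hα) h2).perm
  exfalso
  push_neg at h1 h2
  rw [hba, hca] at h2
  have ht0 : 0 ≤ a ⬝ᵥ X *ᵥ a := by simpa using hX.dotProduct_mulVec_nonneg a
  have hs0 : 0 ≤ b ⬝ᵥ X *ᵥ b := by simpa using hX.dotProduct_mulVec_nonneg b
  have hcs := psd_cs hX a b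
  have hαγ : 0 < (a ⬝ᵥ X *ᵥ b) * (a ⬝ᵥ X *ᵥ c) := lt_of_le_of_lt (mul_nonneg ht0 hβ) h1
  have hβα : 0 < (b ⬝ᵥ X *ᵥ c) * (a ⬝ᵥ X *ᵥ b) := lt_of_le_of_lt (mul_nonneg hs0 hγ) h2
  have hαp : 0 < a ⬝ᵥ X *ᵥ b := by
    rcases mul_pos_iff.mp hαγ with ⟨h, _⟩ | ⟨h, _⟩
    · exact h
    · linarith
  have hγp : 0 < a ⬝ᵥ X *ᵥ c := by
    rcases mul_pos_iff.mp hαγ with ⟨_, h⟩ | ⟨_, h⟩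
    · exact h
    · linarith
  have hβp : 0 < b ⬝ᵥ X *ᵥ c := by
    rcases mul_pos_iff.mp hβα with ⟨h, _⟩ | ⟨h, _⟩
    · exact h
    · linarith
  have key := mul_lt_mul'' h1 h2 (mul_nonneg ht0 hβ) (mul_nonneg hs0 hγ)
  have hbg : 0 < (b ⬝ᵥ X *ᵥ c) * (a ⬝ᵥ X *ᵥ c) := mul_pos hβp hγp
  have hcs' := mul_le_mul_of_nonneg_right hcs (le_of_lt hbg)
  nlinarith [key, hcs']

lemma psd_combo {X Y : Matrix (Fin n) (Fin n) ℝ} (hX : X.PosSemidef) (hY : Y.PosSemidef)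
    {p q : ℝ} (hp : 0 ≤ p) (hq : 0 ≤ q) : (p • X + q • Y).PosSemidef := by
  refine Matrix.PosSemidef.of_dotProduct_mulVec_nonneg ?_ ?_
  · ext i j
    have h1 := hX.1.apply i j
    have h2 := hY.1.apply i j
    simp only [Matrix.conjTranspose_apply, Matrix.add_apply, Matrix.smul_apply, star_trivial,
      smul_eq_mul] at *
    rw [h1, h2]
  · intro x
    have h1 : 0 ≤ x ⬝ᵥ X *ᵥ x := by simpa using hX.dotProduct_mulVec_nonneg x
    have h2 : 0 ≤ x ⬝ᵥ Y *ᵥ x := by simpa using hY.dotProduct_mulVec_nonneg x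
    rw [star_trivial, Matrix.add_mulVec, dotProduct_add, Matrix.smul_mulVec,
      Matrix.smul_mulVec, dotProduct_smul, dotProduct_smul,
      smul_eq_mul, smul_eq_mul]
    exact add_nonneg (mul_nonneg hp h1) (mul_nonneg hq h2)

lemma combo_eval (X Y : Matrix (Fin n) (Fin n) ℝ) (p q : ℝ) (x y : Fin n → ℝ) :
    x ⬝ᵥ (p • X + q • Y) *ᵥ y = p * (x ⬝ᵥ X *ᵥ y) + q * (x ⬝ᵥ Y *ᵥ y) := by
  rw [Matrix.add_mulVec, dotProduct_add, Matrix.smul_mulVec,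
    Matrix.smul_mulVec, dotProduct_smul, dotProduct_smul,
    smul_eq_mul, smul_eq_mul]

theorem stmt_14 {n : ℕ} (a b c : Fin n → ℝ) :
    IsROG {X : Matrix (Fin n) (Fin n) ℝ | X.PosSemidef ∧
      0 ≤ a ⬝ᵥ X.mulVec b ∧ 0 ≤ b ⬝ᵥ X.mulVec c ∧ 0 ≤ a ⬝ᵥ X.mulVec c} := by
  set S : Set (Matrix (Fin n) (Fin n) ℝ) := {X | X.PosSemidef ∧
      0 ≤ a ⬝ᵥ X.mulVec b ∧ 0 ≤ b ⬝ᵥ X.mulVec c ∧ 0 ≤ a ⬝ᵥ X.mulVec c} with hSdef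
  have hmem : ∀ (v : Fin n → ℝ), 0 ≤ (a ⬝ᵥ v) * (b ⬝ᵥ v) → 0 ≤ (b ⬝ᵥ v) * (c ⬝ᵥ v) →
      0 ≤ (a ⬝ᵥ v) * (c ⬝ᵥ v) → vecMulVec v v ∈ S ∩ RankOneSet n := by
    intro v h1 h2 h3
    refine ⟨⟨vecMulVec_posSemidef v, ?_, ?_, ?_⟩, ⟨v, rfl⟩⟩
    · rw [show (vecMulVec v v).mulVec b = (vecMulVec v v) *ᵥ b from rfl,
        dot_vecMulVec_mulVec, dotProduct_comm v b]
      exact h1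
    · rw [show (vecMulVec v v).mulVec c = (vecMulVec v v) *ᵥ c from rfl,
        dot_vecMulVec_mulVec, dotProduct_comm v c]
      exact h2
    · rw [show (vecMulVec v v).mulVec c = (vecMulVec v v) *ᵥ c from rfl,
        dot_vecMulVec_mulVec, dotProduct_comm v c]
      exact h3
  have hconv : Convex ℝ S := by
    intro X hXm Y hYm p q hp hq hpq
    obtain ⟨hX1, hX2, hX3, hX4⟩ := hXm
    obtain ⟨hY1, hY2, hY3, hY4⟩ := hYm
    refine ⟨psd_combo hX1 hY1 hp hq, ?_, ?_, ?_⟩ <;>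
      rw [show ∀ y, (p • X + q • Y).mulVec y = (p • X + q • Y) *ᵥ y from fun _ => rfl] <;>
      rw [combo_eval] <;>
      exact add_nonneg (mul_nonneg hp (by assumption)) (mul_nonneg hq (by assumption))
  apply Set.Subset.antisymm
  · intro X hXm
    obtain ⟨hpsd, hα, hβ, hγ⟩ := hXm
    obtain ⟨m, w, hw, hgood⟩ := decomp_full hpsd hα hβ hγ
    by_cases hm : m = 0
    · subst hm
      have hX0 : X = 0 := by simpa using hw
      have h0 : vecMulVec (0 : Fin n → ℝ) (0 : Fin n → ℝ) = (0 : Matrix (Fin n) (Fin n) ℝ) := by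
        ext i j
        simp [Matrix.vecMulVec_apply]
      apply subset_convexHull
      rw [hX0, ← h0]
      exact hmem 0 (by simp) (by simp) (by simp)
    · have hmpos : (0:ℝ) < m := by
        exact_mod_cast Nat.pos_of_ne_zero hm
      have hz : ∀ i : Fin m, (m:ℝ) • vecMulVec (w i) (w i) ∈ S ∩ RankOneSet n := by
        intro i
        rw [smul_vecMulVec_self (le_of_lt hmpos)]
        set v := Real.sqrt (m:ℝ) • w i with hvdef
        have hsq : ∀ x : Fin n → ℝ, x ⬝ᵥ v = Real.sqrt (m:ℝ) * (x ⬝ᵥ w i) := by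
          intro x
          rw [hvdef, dotProduct_smul, smul_eq_mul]
        refine hmem v ?_ ?_ ?_ <;> rw [hsq, hsq] <;>
          [skip; skip; skip] <;>
          nlinarith [Real.sq_sqrt (le_of_lt hmpos), Real.sqrt_nonneg (m:ℝ),
            (hgood i).1, (hgood i).2.1, (hgood i).2.2]
      have hcm : Finset.univ.centerMass (fun _ : Fin m => (1:ℝ)/m)
          (fun i => (m:ℝ) • vecMulVec (w i) (w i)) = X := by
        rw [Finset.centerMass]
        have h1 : ∑ _i : Fin m, (1:ℝ)/m = 1 := by
          rw [Finset.sum_const, Finset.card_univ, Fintype.card_fin, nsmul_eq_mul]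
          field_simp
        rw [h1, inv_one, one_smul, hw]
        refine Finset.sum_congr rfl fun i _ => ?_
        rw [smul_smul, one_div, inv_mul_cancel₀ (ne_of_gt hmpos), one_smul]
      rw [← hcm]
      exact Finset.centerMass_mem_convexHull _ (fun i _ => by positivity)
        (by rw [Finset.sum_const, Finset.card_univ, Fintype.card_fin, nsmul_eq_mul]; positivity)
        (fun i _ => hz i)
  · exact convexHull_min Set.inter_subset_left hconv
end
end

section
/- A 3×3 real symmetric matrix X is doubly nonnegative (positive semidefinite and entrywise nonnegative) if and only if it is completely positive, i.e., X = Σᵢ xᵢxᵢᵀ with each xᵢ ∈ ℝ³ entrywise nonnegative. -/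
open Matrix Set

noncomputable section

/-! ### Auxiliary lemmas -/

lemma aux_qf3 (X : Matrix (Fin 3) (Fin 3) ℝ) (hX : X.PosSemidef)
    (hs1 : X 1 0 = X 0 1) (hs2 : X 2 0 = X 0 2) (hs3 : X 2 1 = X 1 2) (p q r : ℝ) :
    0 ≤ X 0 0 * p^2 + X 1 1 * q^2 + X 2 2 * r^2
      + 2 * X 0 1 * p * q + 2 * X 0 2 * p * r + 2 * X 1 2 * q * r := by
  have h := hX.dotProduct_mulVec_nonneg ![p, q, r]
  simp [dotProduct, mulVec, Fin.sum_univ_three, hs1, hs2, hs3] at h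
  nlinarith [h]

lemma aux_quad (a b c : ℝ) (h : ∀ x : ℝ, 0 ≤ a * (x*x) + (2*b)*x + c) : b^2 ≤ a*c := by
  have := discrim_le_zero h
  rw [discrim] at this
  nlinarith [this]

lemma aux_buildB2 (X : Matrix (Fin 3) (Fin 3) ℝ) (r u w : ℝ)
    (hs1 : X 1 0 = X 0 1) (hs2 : X 2 0 = X 0 2) (hs3 : X 2 1 = X 1 2)
    (hrne : r ≠ 0) (hune : u ≠ 0)
    (hr : r * r = X 0 0)
    (hu : u * u = X 0 0 * (X 0 0 * X 1 1 - X 0 1 ^ 2))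
    (hw' : w * w * (X 0 0 * (X 0 0 * X 1 1 - X 0 1 ^ 2)) = (X 0 0 * X 1 1 - X 0 1 ^ 2) * (X 0 0 * X 2 2 - X 0 2 ^ 2)
        - (X 0 0 * X 1 2 - X 0 1 * X 0 2) ^ 2) :
    X = ∑ i, vecMulVec
      (![![X 0 0 / r, X 0 1 / r, X 0 2 / r],
        ![0, (X 0 0 * X 1 1 - X 0 1 ^ 2) / u, (X 0 0 * X 1 2 - X 0 1 * X 0 2) / u],
        ![0, 0, w]] i)
      (![![X 0 0 / r, X 0 1 / r, X 0 2 / r],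
        ![0, (X 0 0 * X 1 1 - X 0 1 ^ 2) / u, (X 0 0 * X 1 2 - X 0 1 * X 0 2) / u],
        ![0, 0, w]] i) := by
  ext i j
  fin_cases i <;> fin_cases j <;>
    simp [Matrix.sum_apply, Fin.sum_univ_three, vecMulVec_apply, hs1, hs2, hs3,
      Matrix.vecHead, Matrix.vecTail] <;>
    field_simp
  · linear_combination X 0 0 * hr
  · linear_combination X 0 1 * hr
  · linear_combination X 0 2 * hr
  · linear_combination X 0 1 * hr
  · linear_combination (X 1 1 * (u*u) - (X 0 0 * X 1 1 - X 0 1 ^ 2)^2) * hr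
      + (X 0 0 * X 1 1 - X 0 1 ^ 2) * hu
  · linear_combination (X 1 2 * (u*u) - (X 0 0 * X 1 1 - X 0 1 ^ 2)*(X 0 0 * X 1 2 - X 0 1 * X 0 2)) * hr
      + (X 0 0 * X 1 2 - X 0 1 * X 0 2) * hu
  · linear_combination X 0 2 * hr
  · linear_combination (X 1 2 * (u*u) - (X 0 0 * X 1 1 - X 0 1 ^ 2)*(X 0 0 * X 1 2 - X 0 1 * X 0 2)) * hr
      + (X 0 0 * X 1 2 - X 0 1 * X 0 2) * hu
  · linear_combination (X 2 2 * (u*u) - (w*w)*(u*u) - (X 0 0 * X 1 2 - X 0 1 * X 0 2)^2) * hr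
      + ((X 0 0 * X 2 2 - X 0 2 ^ 2) - (w*w) * X 0 0) * hu
      + (-(X 0 0)) * hw'

lemma aux_buildB1 (X : Matrix (Fin 3) (Fin 3) ℝ) (r w : ℝ)
    (hs1 : X 1 0 = X 0 1) (hs2 : X 2 0 = X 0 2) (hs3 : X 2 1 = X 1 2)
    (hrne : r ≠ 0)
    (hr : r * r = X 0 0)
    (ht0 : X 0 0 * X 1 1 - X 0 1 ^ 2 = 0)
    (ht2 : X 0 0 * X 1 2 - X 0 1 * X 0 2 = 0)
    (hw' : w * w * X 0 0 = X 0 0 * X 2 2 - X 0 2 ^ 2) :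
    X = ∑ i, vecMulVec
      (![![X 0 0 / r, X 0 1 / r, X 0 2 / r], ![0, 0, w], ![0, 0, 0]] i)
      (![![X 0 0 / r, X 0 1 / r, X 0 2 / r], ![0, 0, w], ![0, 0, 0]] i) := by
  ext i j
  fin_cases i <;> fin_cases j <;>
    simp [Matrix.sum_apply, Fin.sum_univ_three, vecMulVec_apply, hs1, hs2, hs3,
      Matrix.vecHead, Matrix.vecTail] <;>
    field_simp
  · linear_combination X 0 0 * hr
  · linear_combination X 0 1 * hr
  · linear_combination X 0 2 * hr
  · linear_combination X 0 1 * hr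
  · linear_combination X 1 1 * hr + ht0
  · linear_combination X 1 2 * hr + ht2
  · linear_combination X 0 2 * hr
  · linear_combination X 1 2 * hr + ht2
  · linear_combination (X 2 2 - w*w) * hr - hw'

/-- The core construction: a doubly nonnegative 3×3 matrix satisfying the pivot
condition `X₀₁X₀₂ ≤ X₀₀X₁₂` is a sum of three nonnegative rank-one matrices. -/
lemma aux_core (X : Matrix (Fin 3) (Fin 3) ℝ) (hX : X.PosSemidef)
    (hnn : ∀ i j, 0 ≤ X i j) (hcond : X 0 1 * X 0 2 ≤ X 0 0 * X 1 2) :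
    ∃ v : Fin 3 → Fin 3 → ℝ, (∀ i j, 0 ≤ v i j) ∧ X = ∑ i, vecMulVec (v i) (v i) := by
  have hsym : ∀ i j : Fin 3, X j i = X i j := fun i j => by
    have h := congrFun (congrFun hX.1 i) j
    simpa [conjTranspose_apply] using h
  have hs1 : X 1 0 = X 0 1 := hsym 0 1
  have hs2 : X 2 0 = X 0 2 := hsym 0 2
  have hs3 : X 2 1 = X 1 2 := hsym 1 2
  have hQ := aux_qf3 X hX hs1 hs2 hs3
  have cs01 : X 0 1 ^ 2 ≤ X 0 0 * X 1 1 := aux_quad _ _ _ (fun x => by nlinarith [hQ x 1 0])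
  have cs02 : X 0 2 ^ 2 ≤ X 0 0 * X 2 2 := aux_quad _ _ _ (fun x => by nlinarith [hQ x 0 1])
  have cs12 : X 1 2 ^ 2 ≤ X 1 1 * X 2 2 := aux_quad _ _ _ (fun x => by nlinarith [hQ 0 x 1])
  rcases (hnn 0 0).eq_or_lt with h00 | h00
  · -- X 0 0 = 0
    have hz01 : X 0 0 * X 1 1 = 0 := by rw [← h00]; ring
    have hz02 : X 0 0 * X 2 2 = 0 := by rw [← h00]; ring
    have e01 : X 0 1 = 0 := by
      have h : X 0 1 ^ 2 = 0 := le_antisymm (by linarith) (sq_nonneg _)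
      exact pow_eq_zero_iff (two_ne_zero) |>.mp h
    have e02 : X 0 2 = 0 := by
      have h : X 0 2 ^ 2 = 0 := le_antisymm (by linarith) (sq_nonneg _)
      exact pow_eq_zero_iff (two_ne_zero) |>.mp h
    rcases (hnn 1 1).eq_or_lt with h11 | h11
    · -- X 1 1 = 0
      have e12 : X 1 2 = 0 := by
        have hz12 : X 1 1 * X 2 2 = 0 := by rw [← h11]; ring
        have h : X 1 2 ^ 2 = 0 := le_antisymm (by linarith) (sq_nonneg _)
        exact pow_eq_zero_iff (two_ne_zero) |>.mp h
      refine ⟨![![0, 0, Real.sqrt (X 2 2)], ![0,0,0], ![0,0,0]], ?_, ?_⟩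
      · intro i j; fin_cases i <;> fin_cases j <;>
          simp [Matrix.vecHead, Matrix.vecTail] <;> positivity
      · ext i j
        fin_cases i <;> fin_cases j <;>
          simp [Matrix.sum_apply, Fin.sum_univ_three, vecMulVec_apply, ← h00, ← h11,
            e01, e02, e12, hs1, hs2, hs3, Matrix.vecHead, Matrix.vecTail]
        exact (Real.mul_self_sqrt (hnn 2 2)).symm
    · -- 0 < X 1 1
      refine ⟨![![0, X 1 1 / Real.sqrt (X 1 1), X 1 2 / Real.sqrt (X 1 1)],
          ![0, 0, Real.sqrt ((X 1 1 * X 2 2 - X 1 2 ^ 2) / X 1 1)], ![0,0,0]], ?_, ?_⟩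
      · intro i j; fin_cases i <;> fin_cases j <;>
          simp [Matrix.vecHead, Matrix.vecTail] <;>
          first
            | positivity
            | exact div_nonneg (hnn 1 1) (Real.sqrt_nonneg _)
            | exact div_nonneg (hnn 1 2) (Real.sqrt_nonneg _)
      · have hm : (0:ℝ) < Real.sqrt (X 1 1) := Real.sqrt_pos.mpr h11
        have hw2 : Real.sqrt ((X 1 1 * X 2 2 - X 1 2 ^ 2) / X 1 1)
              * Real.sqrt ((X 1 1 * X 2 2 - X 1 2 ^ 2) / X 1 1)
            = (X 1 1 * X 2 2 - X 1 2 ^ 2) / X 1 1 :=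
          Real.mul_self_sqrt (div_nonneg (by linarith) h11.le)
        ext i j
        fin_cases i <;> fin_cases j <;>
          simp [Matrix.sum_apply, Fin.sum_univ_three, vecMulVec_apply, ← h00, e01, e02,
            hs1, hs2, hs3, Matrix.vecHead, Matrix.vecTail]
        · field_simp; rw [Real.sq_sqrt h11.le]
        · field_simp
        · field_simp
        · rw [hw2]; field_simp; rw [Real.sq_sqrt h11.le]; ring
  · -- 0 < X 0 0
    have ht11 : 0 ≤ X 0 0 * X 1 1 - X 0 1 ^ 2 := by linarith
    have ht22 : 0 ≤ X 0 0 * X 2 2 - X 0 2 ^ 2 := by linarith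
    have ht12 : 0 ≤ X 0 0 * X 1 2 - X 0 1 * X 0 2 := by linarith
    have hS : ∀ x : ℝ, 0 ≤ (X 0 0 * X 1 1 - X 0 1 ^ 2) * (x*x)
        + (2*(X 0 0 * X 1 2 - X 0 1 * X 0 2))*x + (X 0 0 * X 2 2 - X 0 2 ^ 2) := by
      intro x
      have h := hQ (-(X 0 1 * x + X 0 2)) (X 0 0 * x) (X 0 0)
      nlinarith [h, h00]
    have hdet2 := aux_quad _ _ _ hS
    have hr : (0:ℝ) < Real.sqrt (X 0 0) := Real.sqrt_pos.mpr h00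
    have hrr : Real.sqrt (X 0 0) * Real.sqrt (X 0 0) = X 0 0 := Real.mul_self_sqrt h00.le
    rcases ht11.eq_or_lt with h1 | h1
    · -- degenerate Schur complement
      have e2 : X 0 0 * X 1 2 - X 0 1 * X 0 2 = 0 := by
        have h : (X 0 0 * X 1 2 - X 0 1 * X 0 2) ^ 2 = 0 :=
          le_antisymm (by nlinarith) (sq_nonneg _)
        exact pow_eq_zero_iff (two_ne_zero) |>.mp h
      refine ⟨![![X 0 0 / Real.sqrt (X 0 0), X 0 1 / Real.sqrt (X 0 0), X 0 2 / Real.sqrt (X 0 0)],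
          ![0, 0, Real.sqrt ((X 0 0 * X 2 2 - X 0 2 ^ 2) / X 0 0)], ![0,0,0]], ?_, ?_⟩
      · intro i j; fin_cases i <;> fin_cases j <;>
          simp [Matrix.vecHead, Matrix.vecTail] <;>
          first
            | positivity
            | exact div_nonneg (hnn 0 0) (Real.sqrt_nonneg _)
            | exact div_nonneg (hnn 0 1) (Real.sqrt_nonneg _)
            | exact div_nonneg (hnn 0 2) (Real.sqrt_nonneg _)
      · refine aux_buildB1 X _ _ hs1 hs2 hs3 hr.ne' hrr h1.symm e2 ?_
        rw [Real.mul_self_sqrt (div_nonneg ht22 h00.le)]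
        field_simp
    · -- nondegenerate case
      have hu0 : (0:ℝ) < X 0 0 * (X 0 0 * X 1 1 - X 0 1 ^ 2) := by positivity
      have hu : (0:ℝ) < Real.sqrt (X 0 0 * (X 0 0 * X 1 1 - X 0 1 ^ 2)) := Real.sqrt_pos.mpr hu0
      have huu := Real.mul_self_sqrt hu0.le
      refine ⟨![![X 0 0 / Real.sqrt (X 0 0), X 0 1 / Real.sqrt (X 0 0), X 0 2 / Real.sqrt (X 0 0)],
          ![0, (X 0 0 * X 1 1 - X 0 1 ^ 2) / Real.sqrt (X 0 0 * (X 0 0 * X 1 1 - X 0 1 ^ 2)),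
            (X 0 0 * X 1 2 - X 0 1 * X 0 2) / Real.sqrt (X 0 0 * (X 0 0 * X 1 1 - X 0 1 ^ 2))],
          ![0, 0, Real.sqrt (((X 0 0 * X 1 1 - X 0 1 ^ 2) * (X 0 0 * X 2 2 - X 0 2 ^ 2)
              - (X 0 0 * X 1 2 - X 0 1 * X 0 2) ^ 2) / (X 0 0 * (X 0 0 * X 1 1 - X 0 1 ^ 2)))]],
          ?_, ?_⟩
      · intro i j; fin_cases i <;> fin_cases j <;>
          simp [Matrix.vecHead, Matrix.vecTail] <;>
          first
            | positivity
            | exact div_nonneg (hnn 0 0) (Real.sqrt_nonneg _)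
            | exact div_nonneg (hnn 0 1) (Real.sqrt_nonneg _)
            | exact div_nonneg (hnn 0 2) (Real.sqrt_nonneg _)
            | exact div_nonneg ht11 (Real.sqrt_nonneg _)
            | exact div_nonneg ht12 (Real.sqrt_nonneg _)
      · refine aux_buildB2 X _ _ _ hs1 hs2 hs3 hr.ne' hu.ne' hrr huu ?_
        rw [Real.mul_self_sqrt (div_nonneg (by linarith) hu0.le)]
        field_simp

/-- Transfer a decomposition along a simultaneous permutation of rows and columns. -/
lemma aux_perm (X : Matrix (Fin 3) (Fin 3) ℝ) (σ : Equiv.Perm (Fin 3))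
    (h : ∃ v : Fin 3 → Fin 3 → ℝ, (∀ i j, 0 ≤ v i j) ∧
        X.submatrix σ σ = ∑ i, vecMulVec (v i) (v i)) :
    ∃ v : Fin 3 → Fin 3 → ℝ, (∀ i j, 0 ≤ v i j) ∧ X = ∑ i, vecMulVec (v i) (v i) := by
  obtain ⟨v, hv, hXe⟩ := h
  refine ⟨fun k j => v k (σ.symm j), fun i j => hv _ _, ?_⟩
  ext i j
  have h2 := congrFun (congrFun hXe (σ.symm i)) (σ.symm j)
  simpa [Matrix.submatrix_apply, Matrix.sum_apply, vecMulVec_apply,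
    Equiv.apply_symm_apply] using h2

lemma aux_psd_vecMulVec (x : Fin 3 → ℝ) : (vecMulVec x x).PosSemidef := by
  refine Matrix.PosSemidef.of_dotProduct_mulVec_nonneg ?_ ?_
  · ext i j
    simp [conjTranspose_apply, vecMulVec_apply, mul_comm]
  · intro y
    have h : star y ⬝ᵥ (vecMulVec x x) *ᵥ y
        = (x 0 * y 0 + x 1 * y 1 + x 2 * y 2) ^ 2 := by
      simp [dotProduct, mulVec, vecMulVec_apply, Fin.sum_univ_three]
      ring
    rw [h]
    exact sq_nonneg _

theorem stmt_15 (X : Matrix (Fin 3) (Fin 3) ℝ) :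
    (X.PosSemidef ∧ ∀ i j, 0 ≤ X i j) ↔
      ∃ (k : ℕ) (v : Fin k → Fin 3 → ℝ), (∀ i j, 0 ≤ v i j) ∧
        X = ∑ i, vecMulVec (v i) (v i) := by
  constructor
  · rintro ⟨hX, hnn⟩
    have hsym : ∀ i j : Fin 3, X j i = X i j := fun i j => by
      have h := congrFun (congrFun hX.1 i) j
      simpa [conjTranspose_apply] using h
    have hQ := aux_qf3 X hX (hsym 0 1) (hsym 0 2) (hsym 1 2)
    have cs01 : X 0 1 ^ 2 ≤ X 0 0 * X 1 1 := aux_quad _ _ _ (fun x => by nlinarith [hQ x 1 0])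
    have cs02 : X 0 2 ^ 2 ≤ X 0 0 * X 2 2 := aux_quad _ _ _ (fun x => by nlinarith [hQ x 0 1])
    have cs12 : X 1 2 ^ 2 ≤ X 1 1 * X 2 2 := aux_quad _ _ _ (fun x => by nlinarith [hQ 0 x 1])
    have key : ∃ v : Fin 3 → Fin 3 → ℝ, (∀ i j, 0 ≤ v i j) ∧
        X = ∑ i, vecMulVec (v i) (v i) := by
      by_cases hc0 : X 0 1 * X 0 2 ≤ X 0 0 * X 1 2
      · exact aux_core X hX hnn hc0
      · push_neg at hc0
        by_cases hc1 : X 0 1 * X 1 2 ≤ X 1 1 * X 0 2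
        · refine aux_perm X (Equiv.swap 0 1) ?_
          refine aux_core _ ((posSemidef_submatrix_equiv (Equiv.swap 0 1)).mpr hX)
            (fun i j => hnn _ _) ?_
          simp only [Matrix.submatrix_apply]
          norm_num [Equiv.swap_apply_def, Fin.ext_iff]
          show X 1 0 * X 1 2 ≤ X 1 1 * X 0 2
          rw [hsym 0 1]
          exact hc1
        · push_neg at hc1
          have hc2 : X 0 2 * X 1 2 ≤ X 2 2 * X 0 1 := by
            by_contra hcon
            push_neg at hcon
            have ha : 0 < X 0 1 := by
              nlinarith [hc0, mul_nonneg (hnn 0 0) (hnn 1 2), hnn 0 1, hnn 0 2]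
            have hb : 0 < X 0 2 := by
              nlinarith [hcon, mul_nonneg (hnn 2 2) (hnn 0 1), hnn 0 2, hnn 1 2]
            have hc : 0 < X 1 2 := by
              nlinarith [hc1, mul_nonneg (hnn 1 1) (hnn 0 2), hnn 0 1, hnn 1 2]
            have p1 := mul_lt_mul'' hc0 hc1 (mul_nonneg (hnn 0 0) (hnn 1 2))
              (mul_nonneg (hnn 1 1) (hnn 0 2))
            have p2 := mul_lt_mul'' p1 hcon
              (mul_nonneg (mul_nonneg (hnn 0 0) (hnn 1 2)) (mul_nonneg (hnn 1 1) (hnn 0 2)))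
              (mul_nonneg (hnn 2 2) (hnn 0 1))
            have q1 := mul_le_mul cs01 cs02 (sq_nonneg _) (mul_nonneg (hnn 0 0) (hnn 1 1))
            have q2 := mul_le_mul q1 cs12 (sq_nonneg _)
              (mul_nonneg (mul_nonneg (hnn 0 0) (hnn 1 1)) (mul_nonneg (hnn 0 0) (hnn 2 2)))
            nlinarith [p2, q2, mul_pos (mul_pos ha hb) hc,
              mul_nonneg (mul_nonneg (hnn 0 0) (hnn 1 1)) (hnn 2 2)]
          refine aux_perm X (Equiv.swap 0 2) ?_
          refine aux_core _ ((posSemidef_submatrix_equiv (Equiv.swap 0 2)).mpr hX)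
            (fun i j => hnn _ _) ?_
          simp only [Matrix.submatrix_apply]
          norm_num [Equiv.swap_apply_def, Fin.ext_iff]
          show X 2 1 * X 2 0 ≤ X 2 2 * X 1 0
          rw [hsym 1 2, hsym 0 2, hsym 0 1]
          linarith [hc2]
    obtain ⟨v, hv, hXe⟩ := key
    exact ⟨3, v, hv, hXe⟩
  · rintro ⟨k, v, hv, rfl⟩
    constructor
    · exact Finset.sum_induction _ Matrix.PosSemidef
        (fun A B hA hB => hA.add hB) Matrix.PosSemidef.zero
        (fun i _ => aux_psd_vecMulVec (v i))
    · intro i j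
      simp only [Matrix.sum_apply, vecMulVec_apply]
      exact Finset.sum_nonneg fun l _ => mul_nonneg (hv l i) (hv l j)
end
end

section
/- Let M₁ = Diag(1,−1,0) and M₂ = Diag(0,1,−1) in S³. Then the cone T = {X ∈ S³_+ : X₁₁ = X₂₂ = X₃₃} is not rank-one generated; in particular, for w = (1,1,√2)ᵀ and z = (−1,1,0)ᵀ, the rank-two matrix X = wwᵀ + zzᵀ lies in T but its range contains no nonzero vector x with x₁² = x₂² = x₃². -/
open Matrix Set

noncomputable section

/-- The cone `{X ∈ S³₊ : X₁₁ = X₂₂ = X₃₃}`. -/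
def T16 : Set (Matrix (Fin 3) (Fin 3) ℝ) :=
  {X | X.PosSemidef ∧ X 0 0 = X 1 1 ∧ X 1 1 = X 2 2}

def w16 : Fin 3 → ℝ := ![1, 1, Real.sqrt 2]

def z16 : Fin 3 → ℝ := ![-1, 1, 0]

def X16 : Matrix (Fin 3) (Fin 3) ℝ := vecMulVec w16 w16 + vecMulVec z16 z16

lemma sqrt2_sq : Real.sqrt 2 * Real.sqrt 2 = 2 := Real.mul_self_sqrt (by norm_num)

lemma X16_eq : X16 = !![2, 0, Real.sqrt 2; 0, 2, Real.sqrt 2; Real.sqrt 2, Real.sqrt 2, 2] := by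
  ext i j
  fin_cases i <;> fin_cases j <;>
    simp [X16, vecMulVec_apply, w16, z16, sqrt2_sq] <;> ring

lemma psd_vecMulVec (v : Fin 3 → ℝ) : (vecMulVec v v).PosSemidef := by
  refine Matrix.PosSemidef.of_dotProduct_mulVec_nonneg ?_ ?_
  · ext i j
    simp [Matrix.conjTranspose_apply, vecMulVec_apply, mul_comm]
  · intro x
    have h : dotProduct (star x) ((vecMulVec v v) *ᵥ x) = (v ⬝ᵥ x) * (v ⬝ᵥ x) := by
      simp only [star_trivial, dotProduct, mulVec, vecMulVec_apply, Fin.sum_univ_three]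
      ring
    rw [h]
    exact mul_self_nonneg _

lemma X16_mem_T16 : X16 ∈ T16 := by
  refine ⟨(psd_vecMulVec w16).add (psd_vecMulVec z16), ?_, ?_⟩ <;> simp [X16_eq]

lemma sqrt2_gt_one : (1:ℝ) < Real.sqrt 2 := by
  nlinarith [sqrt2_sq, Real.sqrt_nonneg 2]

lemma key16 : ∀ X ∈ convexHull ℝ (T16 ∩ RankOneSet 3),
    0 ≤ X 0 0 + X 0 1 - X 0 2 - X 1 2 := by
  intro X hX
  have hconv : Convex ℝ {Y : Matrix (Fin 3) (Fin 3) ℝ | 0 ≤ Y 0 0 + Y 0 1 - Y 0 2 - Y 1 2} := by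
    intro Y hY Z hZ a b ha hb hab
    simp only [mem_setOf_eq, Matrix.add_apply, Matrix.smul_apply, smul_eq_mul] at hY hZ ⊢
    nlinarith [mul_nonneg ha hY, mul_nonneg hb hZ]
  have hsub : T16 ∩ RankOneSet 3 ⊆
      {Y : Matrix (Fin 3) (Fin 3) ℝ | 0 ≤ Y 0 0 + Y 0 1 - Y 0 2 - Y 1 2} := by
    rintro Y ⟨⟨-, h01, h12⟩, x, rfl⟩
    simp only [vecMulVec_apply, mem_setOf_eq] at *
    have e1 : (x 1 - x 0) * (x 1 + x 0) = 0 := by linear_combination -h01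
    have e2 : (x 2 - x 0) * (x 2 + x 0) = 0 := by linear_combination -h01 - h12
    rcases mul_eq_zero.mp e1 with h1 | h1 <;> rcases mul_eq_zero.mp e2 with h2 | h2 <;>
      nlinarith [sq_nonneg (x 0)]
  exact convexHull_min hsub hconv hX

lemma not_ROG_T16 : ¬ IsROG T16 := by
  intro h
  have hX : X16 ∈ convexHull ℝ (T16 ∩ RankOneSet 3) := h ▸ X16_mem_T16
  have h2 := key16 X16 hX
  simp only [X16_eq] at h2
  norm_num at h2
  simp only [Matrix.cons_val] at h2
  nlinarith [sqrt2_gt_one]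

lemma lin_ind : LinearIndependent ℝ ![w16, z16] := by
  rw [linearIndependent_fin2]
  refine ⟨?_, ?_⟩
  · intro h
    have h1 := congrFun h 1
    simp [z16] at h1
  · intro a h
    have h2 := congrFun h 2
    simp [w16, z16] at h2
    nlinarith [sqrt2_gt_one, h2]

lemma range16 : LinearMap.range X16.mulVecLin = Submodule.span ℝ {w16, z16} := by
  apply le_antisymm
  · rintro x ⟨y, rfl⟩
    have hy : X16.mulVecLin y =
        (y 0 + y 1 + Real.sqrt 2 * y 2) • w16 + (y 1 - y 0) • z16 := by
      funext i
      fin_cases i <;>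
        simp [mulVecLin_apply, X16_eq, mulVec, dotProduct, Fin.sum_univ_three, w16, z16] <;>
        first
          | ring1
          | linear_combination (y 2) * sqrt2_sq
          | linear_combination (-(y 2)) * sqrt2_sq
          | linear_combination (2 * y 2) * sqrt2_sq
          | linear_combination (-2 * y 2) * sqrt2_sq
    rw [hy]
    exact Submodule.add_mem _
      (Submodule.smul_mem _ _ (Submodule.subset_span (mem_insert _ _)))
      (Submodule.smul_mem _ _ (Submodule.subset_span (mem_insert_of_mem _ rfl)))
  · rw [Submodule.span_le]
    rintro v (rfl | rfl)
    · refine ⟨![1/4, 1/4, Real.sqrt 2 / 4], ?_⟩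
      funext i
      fin_cases i <;>
        simp [mulVecLin_apply, X16_eq, mulVec, dotProduct, Fin.sum_univ_three, w16] <;>
        first
          | ring1
          | linear_combination (1/4 : ℝ) * sqrt2_sq
          | linear_combination (-1/4 : ℝ) * sqrt2_sq
          | linear_combination (1/2 : ℝ) * sqrt2_sq
          | linear_combination (-1/2 : ℝ) * sqrt2_sq
    · refine ⟨![-1/2, 1/2, 0], ?_⟩
      funext i
      fin_cases i <;>
        simp [mulVecLin_apply, X16_eq, mulVec, dotProduct, Fin.sum_univ_three, z16] <;> ring1

lemma rank16 : X16.rank = 2 := by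
  rw [Matrix.rank, range16]
  have h : ({w16, z16} : Set (Fin 3 → ℝ)) = Set.range ![w16, z16] := by
    rw [Matrix.range_cons_cons_empty]
  rw [h, finrank_span_eq_card lin_ind]
  rfl

theorem stmt_16 :
    ¬ IsROG T16 ∧ X16 ∈ T16 ∧ X16.rank = 2 ∧
      ∀ x : Fin 3 → ℝ, (∃ y : Fin 3 → ℝ, X16.mulVec y = x) →
        (x 0) ^ 2 = (x 1) ^ 2 → (x 1) ^ 2 = (x 2) ^ 2 → x = 0 := by
  refine ⟨not_ROG_T16, X16_mem_T16, rank16, ?_⟩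
  rintro x ⟨y, rfl⟩ h01 h12
  set a := y 0 + y 1 + Real.sqrt 2 * y 2 with ha
  set b := y 1 - y 0 with hb
  have hx : ∀ i, X16.mulVec y i = a * w16 i + b * z16 i := by
    intro i
    fin_cases i <;>
      simp [X16_eq, mulVec, dotProduct, Fin.sum_univ_three, w16, z16, ha, hb] <;>
      first
        | ring1
        | linear_combination (y 2) * sqrt2_sq
        | linear_combination (-(y 2)) * sqrt2_sq
        | linear_combination (2 * y 2) * sqrt2_sq
        | linear_combination (-2 * y 2) * sqrt2_sq
  have h0 := hx 0; have h1 := hx 1; have h2 := hx 2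
  simp [w16, z16] at h0 h1 h2
  rw [h0, h1] at h01
  rw [h1, h2] at h12
  -- h01 : (a*1 + b*(-1))^2 = (a*1 + b*1)^2 ; h12 : (a*1+b*1)^2 = (a*√2 + b*0)^2
  have hab : a * b = 0 := by
    first
      | linear_combination (-1/4 : ℝ) * h01
      | linear_combination (1/4 : ℝ) * h01
  have hb2 : b ^ 2 = a ^ 2 := by
    first
      | linear_combination h12 + a ^ 2 * sqrt2_sq - 2 * hab
      | linear_combination h12 - a ^ 2 * sqrt2_sq - 2 * hab
      | linear_combination - h12 + a ^ 2 * sqrt2_sq - 2 * hab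
      | linear_combination h12 + a ^ 2 * sqrt2_sq + 2 * hab
  have ha4 : a ^ 4 = 0 := by linear_combination (a * b) * hab - a ^ 2 * hb2
  have hA : a = 0 := by
    have := pow_eq_zero_iff (n := 4) (by norm_num) |>.mp ha4
    exact this
  have hB : b = 0 := by
    have hb0 : b ^ 2 = 0 := by rw [hb2, hA]; ring
    exact pow_eq_zero_iff (n := 2) (by norm_num) |>.mp hb0
  funext i
  rw [hx i, hA, hB]
  simp
end
end

section
/- (Dines) Let M₁, M₂ ∈ S^n and suppose that for every (α₁,α₂) ≠ (0,0) the combination α₁M₁ + α₂M₂ is not positive semidefinite. Then the joint image map x ↦ (xᵀM₁x, xᵀM₂x) is surjective onto ℝ². -/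
open Matrix Set

noncomputable section

section Dines

variable {n : ℕ} (M : Matrix (Fin n) (Fin n) ℝ)

lemma qform_smul (r : ℝ) (x : Fin n → ℝ) :
    (r • x) ⬝ᵥ M.mulVec (r • x) = r ^ 2 * (x ⬝ᵥ M.mulVec x) := by
  simp [Matrix.mulVec_smul, smul_dotProduct, dotProduct_smul, smul_eq_mul]
  ring

lemma symm_bil (hM : M.IsSymm) (a b : Fin n → ℝ) :
    b ⬝ᵥ M.mulVec a = a ⬝ᵥ M.mulVec b := by
  rw [Matrix.dotProduct_mulVec a M b, ← Matrix.mulVec_transpose, hM.eq,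
    dotProduct_comm]

lemma qform_expand (hM : M.IsSymm) (a b : Fin n → ℝ) (s t : ℝ) :
    (s • a + t • b) ⬝ᵥ M.mulVec (s • a + t • b)
      = s ^ 2 * (a ⬝ᵥ M.mulVec a) + 2 * (s * t) * (a ⬝ᵥ M.mulVec b)
        + t ^ 2 * (b ⬝ᵥ M.mulVec b) := by
  have hba := symm_bil M hM a b
  simp only [Matrix.mulVec_add, Matrix.mulVec_smul, add_dotProduct,
    dotProduct_add, smul_dotProduct, dotProduct_smul, smul_eq_mul]
  linear_combination (s * t) * hba

end Dines

/-- Core two-variable algebraic lemma. -/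
lemma dines_core (P1 P2 Q1 Q2 W1 W2 lam : ℝ) (h0 : 0 ≤ lam) (h1 : lam ≤ 1)
    (hz : lam * P2 + (1 - lam) * Q2 = 0) (hp : 0 < lam * P1 + (1 - lam) * Q1) :
    ∃ s t : ℝ, P2 * s ^ 2 + 2 * W2 * (s * t) + Q2 * t ^ 2 = 0 ∧
      0 < P1 * s ^ 2 + 2 * W1 * (s * t) + Q1 * t ^ 2 := by
  rcases eq_or_lt_of_le h0 with h0' | h0'
  · -- lam = 0
    rw [← h0'] at hz hp
    have hQ2 : Q2 = 0 := by linarith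
    have hQ1 : 0 < Q1 := by linarith
    exact ⟨0, 1, by rw [hQ2]; ring, by rw [show P1 * (0:ℝ)^2 + 2*W1*(0*1) + Q1*1^2 = Q1 by ring]; exact hQ1⟩
  rcases eq_or_lt_of_le h1 with h1' | h1'
  · -- lam = 1
    rw [h1'] at hz hp
    have hP2 : P2 = 0 := by linarith
    have hP1 : 0 < P1 := by linarith
    exact ⟨1, 0, by rw [hP2]; ring, by rw [show P1 * (1:ℝ)^2 + 2*W1*(1*0) + Q1*0^2 = P1 by ring]; exact hP1⟩
  by_cases hP2 : P2 = 0
  · have hQ2 : Q2 = 0 := by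
      have : (1 - lam) * Q2 = 0 := by nlinarith
      have h1l : (1 : ℝ) - lam ≠ 0 := by linarith
      exact (mul_eq_zero.mp this).resolve_left h1l
    by_cases hP1 : 0 < P1
    · exact ⟨1, 0, by rw [hP2]; ring, by nlinarith⟩
    · have hQ1 : 0 < Q1 := by nlinarith
      exact ⟨0, 1, by rw [hQ2]; ring, by nlinarith⟩
  · have hP2sq : 0 < P2 ^ 2 := by positivity
    have hPQ : P2 * Q2 < 0 := by
      have e : (1 - lam) * (P2 * Q2) = -(lam * (P2 * P2)) := by linear_combination P2 * hz
      have e2 : 0 < lam * (P2 * P2) := mul_pos h0' (mul_self_pos.mpr hP2)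
      have h5 : (1 - lam) * (P2 * Q2) < 0 := by rw [e]; linarith
      nlinarith [h5]
    have hD : 0 < W2 ^ 2 - P2 * Q2 := by nlinarith [sq_nonneg W2]
    set r := Real.sqrt (W2 ^ 2 - P2 * Q2) with hrdef
    have hr2 : r ^ 2 = W2 ^ 2 - P2 * Q2 := Real.sq_sqrt hD.le
    have hr0 : 0 ≤ r := Real.sqrt_nonneg _
    have hrW1 : W2 ≤ r := by nlinarith
    have hrW2 : -r ≤ W2 := by nlinarith
    have hBP : 0 < (P2 * Q1 - P1 * Q2) * P2 := by
      have key : (1 - lam) * ((P2 * Q1 - P1 * Q2) * P2)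
          = P2 ^ 2 * (lam * P1 + (1 - lam) * Q1) := by linear_combination (-(P1 * P2)) * hz
      nlinarith
    by_cases hA : 0 ≤ 2 * (W1 * P2 - P1 * W2)
    · refine ⟨(-W2 + r) / P2, 1, ?_, ?_⟩
      · have hs : P2 * ((-W2 + r) / P2) = -W2 + r := by field_simp
        have expand : P2 * (P2 * ((-W2 + r) / P2) ^ 2 + 2 * W2 * (((-W2 + r) / P2) * 1)
            + Q2 * 1 ^ 2) = (P2 * ((-W2 + r) / P2)) ^ 2 + 2 * W2 * (P2 * ((-W2 + r) / P2))
            + P2 * Q2 := by ring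
        have : P2 * (P2 * ((-W2 + r) / P2) ^ 2 + 2 * W2 * (((-W2 + r) / P2) * 1)
            + Q2 * 1 ^ 2) = 0 := by rw [expand, hs]; linear_combination hr2
        exact (mul_eq_zero.mp this).resolve_left hP2
      · have hs : P2 * ((-W2 + r) / P2) = -W2 + r := by field_simp
        have id : P2 ^ 2 * (P1 * ((-W2 + r) / P2) ^ 2 + 2 * W1 * (((-W2 + r) / P2) * 1)
            + Q1 * 1 ^ 2) = P1 * (P2 * ((-W2 + r) / P2)) ^ 2
            + 2 * W1 * P2 * (P2 * ((-W2 + r) / P2)) + Q1 * P2 ^ 2 := by ring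
        rw [hs] at id
        have id2 : P1 * (-W2 + r) ^ 2 + 2 * W1 * P2 * (-W2 + r) + Q1 * P2 ^ 2
            = 2 * (W1 * P2 - P1 * W2) * (-W2 + r) + (P2 * Q1 - P1 * Q2) * P2 := by
          linear_combination P1 * hr2
        have hpos : 0 < P2 ^ 2 * (P1 * ((-W2 + r) / P2) ^ 2
            + 2 * W1 * (((-W2 + r) / P2) * 1) + Q1 * 1 ^ 2) := by
          rw [id, id2]
          nlinarith [mul_nonneg hA (by linarith : (0:ℝ) ≤ -W2 + r)]
        exact (mul_pos_iff_of_pos_left hP2sq).mp hpos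
    · push_neg at hA
      refine ⟨(-W2 - r) / P2, 1, ?_, ?_⟩
      · have hs : P2 * ((-W2 - r) / P2) = -W2 - r := by field_simp
        have : P2 * (P2 * ((-W2 - r) / P2) ^ 2 + 2 * W2 * (((-W2 - r) / P2) * 1)
            + Q2 * 1 ^ 2) = 0 := by
          have expand : P2 * (P2 * ((-W2 - r) / P2) ^ 2 + 2 * W2 * (((-W2 - r) / P2) * 1)
              + Q2 * 1 ^ 2) = (P2 * ((-W2 - r) / P2)) ^ 2 + 2 * W2 * (P2 * ((-W2 - r) / P2))
              + P2 * Q2 := by ring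
          rw [expand, hs]; linear_combination hr2
        exact (mul_eq_zero.mp this).resolve_left hP2
      · have hs : P2 * ((-W2 - r) / P2) = -W2 - r := by field_simp
        have id : P2 ^ 2 * (P1 * ((-W2 - r) / P2) ^ 2 + 2 * W1 * (((-W2 - r) / P2) * 1)
            + Q1 * 1 ^ 2) = P1 * (P2 * ((-W2 - r) / P2)) ^ 2
            + 2 * W1 * P2 * (P2 * ((-W2 - r) / P2)) + Q1 * P2 ^ 2 := by ring
        rw [hs] at id
        have id2 : P1 * (-W2 - r) ^ 2 + 2 * W1 * P2 * (-W2 - r) + Q1 * P2 ^ 2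
            = 2 * (W1 * P2 - P1 * W2) * (-W2 - r) + (P2 * Q1 - P1 * Q2) * P2 := by
          linear_combination P1 * hr2
        have hpos : 0 < P2 ^ 2 * (P1 * ((-W2 - r) / P2) ^ 2
            + 2 * W1 * (((-W2 - r) / P2) * 1) + Q1 * 1 ^ 2) := by
          rw [id, id2]
          nlinarith [mul_nonneg (neg_nonneg.mpr hA.le) (neg_nonneg.mpr (by linarith : -W2 - r ≤ 0))]
        exact (mul_pos_iff_of_pos_left hP2sq).mp hpos

section Dines2

variable {n : ℕ} (M₁ M₂ : Matrix (Fin n) (Fin n) ℝ)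

/-- If the image point of `u` is positively aligned with `(y₁, y₂)`, scale it to hit exactly. -/
lemma dines_align (y₁ y₂ : ℝ) (u : Fin n → ℝ)
    (hc : y₁ * (u ⬝ᵥ M₂.mulVec u) - y₂ * (u ⬝ᵥ M₁.mulVec u) = 0)
    (hd : 0 < y₁ * (u ⬝ᵥ M₁.mulVec u) + y₂ * (u ⬝ᵥ M₂.mulVec u)) :
    ∃ x : Fin n → ℝ, x ⬝ᵥ M₁.mulVec x = y₁ ∧ x ⬝ᵥ M₂.mulVec x = y₂ := by
  set g₁ := u ⬝ᵥ M₁.mulVec u with hg₁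
  set g₂ := u ⬝ᵥ M₂.mulVec u with hg₂
  by_cases hy : y₁ = 0 ∧ y₂ = 0
  · exfalso; rw [hy.1, hy.2] at hd; linarith
  have hS : 0 < y₁ ^ 2 + y₂ ^ 2 := by
    rcases not_and_or.mp hy with hy1 | hy1
    · nlinarith [mul_self_pos.mpr hy1, sq_nonneg y₂]
    · nlinarith [mul_self_pos.mpr hy1, sq_nonneg y₁]
  set E := y₁ * g₁ + y₂ * g₂ with hE
  have hEne : E ≠ 0 := ne_of_gt hd
  have e1 : (y₁ ^ 2 + y₂ ^ 2) * g₁ = y₁ * E := by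
    rw [hE]; linear_combination (-y₂) * hc
  have e2 : (y₁ ^ 2 + y₂ ^ 2) * g₂ = y₂ * E := by
    rw [hE]; linear_combination y₁ * hc
  refine ⟨Real.sqrt ((y₁ ^ 2 + y₂ ^ 2) / E) • u, ?_, ?_⟩
  · rw [qform_smul, Real.sq_sqrt (by positivity : 0 ≤ (y₁ ^ 2 + y₂ ^ 2) / E), ← hg₁]
    field_simp
    linear_combination e1
  · rw [qform_smul, Real.sq_sqrt (by positivity : 0 ≤ (y₁ ^ 2 + y₂ ^ 2) / E), ← hg₂]
    field_simp
    linear_combination e2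

lemma dines_segment (h₁ : M₁.IsSymm) (h₂ : M₂.IsSymm) (a b : Fin n → ℝ) (lam : ℝ)
    (h0 : 0 ≤ lam) (h1 : lam ≤ 1) :
    ∃ x : Fin n → ℝ,
      x ⬝ᵥ M₁.mulVec x = lam * (a ⬝ᵥ M₁.mulVec a) + (1 - lam) * (b ⬝ᵥ M₁.mulVec b) ∧
      x ⬝ᵥ M₂.mulVec x = lam * (a ⬝ᵥ M₂.mulVec a) + (1 - lam) * (b ⬝ᵥ M₂.mulVec b) := by
  set R₁ := lam * (a ⬝ᵥ M₁.mulVec a) + (1 - lam) * (b ⬝ᵥ M₁.mulVec b) with hR₁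
  set R₂ := lam * (a ⬝ᵥ M₂.mulVec a) + (1 - lam) * (b ⬝ᵥ M₂.mulVec b) with hR₂
  by_cases hR : R₁ = 0 ∧ R₂ = 0
  · refine ⟨0, ?_, ?_⟩ <;> simp [hR.1, hR.2]
  have hS : 0 < R₁ ^ 2 + R₂ ^ 2 := by
    rcases not_and_or.mp hR with hy1 | hy1
    · nlinarith [mul_self_pos.mpr hy1, sq_nonneg R₂]
    · nlinarith [mul_self_pos.mpr hy1, sq_nonneg R₁]
  obtain ⟨s, t, hst2, hst1⟩ := dines_core
    (R₁ * (a ⬝ᵥ M₁.mulVec a) + R₂ * (a ⬝ᵥ M₂.mulVec a))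
    (R₁ * (a ⬝ᵥ M₂.mulVec a) - R₂ * (a ⬝ᵥ M₁.mulVec a))
    (R₁ * (b ⬝ᵥ M₁.mulVec b) + R₂ * (b ⬝ᵥ M₂.mulVec b))
    (R₁ * (b ⬝ᵥ M₂.mulVec b) - R₂ * (b ⬝ᵥ M₁.mulVec b))
    (R₁ * (a ⬝ᵥ M₁.mulVec b) + R₂ * (a ⬝ᵥ M₂.mulVec b))
    (R₁ * (a ⬝ᵥ M₂.mulVec b) - R₂ * (a ⬝ᵥ M₁.mulVec b))
    lam h0 h1 (by rw [hR₁, hR₂]; ring) (by rw [hR₁, hR₂]; ring_nf; ring_nf at hS; linarith)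
  have hq1 := qform_expand M₁ h₁ a b s t
  have hq2 := qform_expand M₂ h₂ a b s t
  have hc : R₁ * ((s • a + t • b) ⬝ᵥ M₂.mulVec (s • a + t • b))
      - R₂ * ((s • a + t • b) ⬝ᵥ M₁.mulVec (s • a + t • b)) = 0 := by
    rw [hq1, hq2]; linear_combination hst2
  have hd : 0 < R₁ * ((s • a + t • b) ⬝ᵥ M₁.mulVec (s • a + t • b))
      + R₂ * ((s • a + t • b) ⬝ᵥ M₂.mulVec (s • a + t • b)) := by
    rw [hq1, hq2]
    have : R₁ * (s ^ 2 * (a ⬝ᵥ M₁.mulVec a) + 2 * (s * t) * (a ⬝ᵥ M₁.mulVec b)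
        + t ^ 2 * (b ⬝ᵥ M₁.mulVec b)) + R₂ * (s ^ 2 * (a ⬝ᵥ M₂.mulVec a)
        + 2 * (s * t) * (a ⬝ᵥ M₂.mulVec b) + t ^ 2 * (b ⬝ᵥ M₂.mulVec b))
        = (R₁ * (a ⬝ᵥ M₁.mulVec a) + R₂ * (a ⬝ᵥ M₂.mulVec a)) * s ^ 2
          + 2 * (R₁ * (a ⬝ᵥ M₁.mulVec b) + R₂ * (a ⬝ᵥ M₂.mulVec b)) * (s * t)
          + (R₁ * (b ⬝ᵥ M₁.mulVec b) + R₂ * (b ⬝ᵥ M₂.mulVec b)) * t ^ 2 := by ring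
    rw [this]; exact hst1
  exact dines_align M₁ M₂ R₁ R₂ (s • a + t • b) hc hd

end Dines2

theorem stmt_18 {n : ℕ} (M₁ M₂ : Matrix (Fin n) (Fin n) ℝ)
    (h₁ : M₁.IsSymm) (h₂ : M₂.IsSymm)
    (h : ∀ α β : ℝ, (α, β) ≠ (0, 0) → ¬ (α • M₁ + β • M₂).PosSemidef) :
    ∀ y₁ y₂ : ℝ, ∃ x : Fin n → ℝ, x ⬝ᵥ M₁.mulVec x = y₁ ∧ x ⬝ᵥ M₂.mulVec x = y₂ := by
  -- negative value extraction from non-PSD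
  have hneg : ∀ α β : ℝ, (α, β) ≠ (0, 0) →
      ∃ x : Fin n → ℝ, α * (x ⬝ᵥ M₁.mulVec x) + β * (x ⬝ᵥ M₂.mulVec x) < 0 := by
    intro α β hne
    have hherm : (α • M₁ + β • M₂).IsHermitian := by
      rw [Matrix.IsHermitian, Matrix.conjTranspose_eq_transpose_of_trivial,
        Matrix.transpose_add, Matrix.transpose_smul, Matrix.transpose_smul, h₁.eq, h₂.eq]
    have hnp := h α β hne
    rw [Matrix.posSemidef_iff_dotProduct_mulVec, not_and] at hnp
    have := hnp hherm
    push_neg at this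
    obtain ⟨x, hx⟩ := this
    refine ⟨x, ?_⟩
    have : star x ⬝ᵥ (α • M₁ + β • M₂) *ᵥ x
        = α * (x ⬝ᵥ M₁.mulVec x) + β * (x ⬝ᵥ M₂.mulVec x) := by
      simp [Matrix.add_mulVec, Matrix.smul_mulVec, dotProduct_add,
        dotProduct_smul, smul_eq_mul, star_trivial]
    rw [this] at hx
    exact hx
  intro y₁ y₂
  by_cases hy : y₁ = 0 ∧ y₂ = 0
  · refine ⟨0, ?_, ?_⟩ <;> simp [hy.1, hy.2]
  by_contra hC
  push_neg at hC
  -- notation: c u, d u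
  set c : (Fin n → ℝ) → ℝ := fun u => y₁ * (u ⬝ᵥ M₂.mulVec u) - y₂ * (u ⬝ᵥ M₁.mulVec u)
    with hcdef
  set d : (Fin n → ℝ) → ℝ := fun u => y₁ * (u ⬝ᵥ M₁.mulVec u) + y₂ * (u ⬝ᵥ M₂.mulVec u)
    with hddef
  have F0 : ∀ u, c u = 0 → d u ≤ 0 := by
    intro u hcu
    by_contra hdu
    push_neg at hdu
    obtain ⟨x, hx1, hx2⟩ := dines_align M₁ M₂ y₁ y₂ u hcu hdu
    exact (hC x hx1) hx2
  -- the crossing inequality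
  have cross : ∀ pa pb, c pa < 0 → 0 < c pb →
      (c pb) * (d pa) - (c pa) * (d pb) ≤ 0 := by
    intro pa pb hca hcb
    set lam := c pb / (c pb - c pa) with hlam
    have hden : 0 < c pb - c pa := by linarith
    have h0 : 0 ≤ lam := by positivity
    have h1 : lam ≤ 1 := by rw [hlam, div_le_one hden]; linarith
    obtain ⟨x, hx1, hx2⟩ := dines_segment M₁ M₂ h₁ h₂ pa pb lam h0 h1
    have hlam1 : lam * (c pb - c pa) = c pb := by rw [hlam]; field_simp
    have hcx : c x = 0 := by
      have : c x = lam * (c pa) + (1 - lam) * (c pb) := by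
        rw [hcdef]; simp only; rw [hx1, hx2]; ring
      rw [this]
      nlinarith [hlam1]
    have hdx : d x = lam * (d pa) + (1 - lam) * (d pb) := by
      rw [hddef]; simp only; rw [hx1, hx2]; ring
    have := F0 x hcx
    rw [hdx] at this
    have hlam2 : (1 - lam) * (c pb - c pa) = -(c pa) := by linear_combination (-1 : ℝ) * hlam1
    have hprod : (c pb - c pa) * (lam * d pa + (1 - lam) * d pb) ≤ 0 :=
      mul_nonpos_iff.mpr (Or.inl ⟨hden.le, this⟩)
    have p1 := congrArg (fun z => z * d pa) hlam1
    have p2 := congrArg (fun z => z * d pb) hlam2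
    nlinarith [p1, p2, hprod]
  -- witnesses
  have hyne : ∀ z₁ z₂ : ℝ, (z₁ ≠ 0 ∨ z₂ ≠ 0) → ((z₁, z₂) : ℝ × ℝ) ≠ (0, 0) := by
    intro z₁ z₂ hz heq
    rw [Prod.mk.injEq] at heq
    rcases hz with hz | hz <;> exact hz (by tauto)
  have hyor : y₁ ≠ 0 ∨ y₂ ≠ 0 := by
    by_contra hcon; push_neg at hcon; exact hy ⟨hcon.1, hcon.2⟩
  obtain ⟨a₀, ha₀⟩ := hneg (-y₂) y₁ (hyne _ _ (by rcases hyor with hh | hh; exacts [Or.inr hh, Or.inl (by simpa using hh)]))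
  have hca₀ : c a₀ < 0 := by rw [hcdef]; simp only; linarith
  obtain ⟨b₀, hb₀⟩ := hneg y₂ (-y₁) (hyne _ _ (by rcases hyor with hh | hh; exacts [Or.inr (by simpa using hh), Or.inl hh]))
  have hcb₀ : 0 < c b₀ := by rw [hcdef]; simp only; linarith
  -- supremum construction
  set S : Set ℝ := {r | ∃ u, c u < 0 ∧ r = d u / (-(c u))} with hSdef
  have hSne : S.Nonempty := ⟨d a₀ / (-(c a₀)), a₀, hca₀, rfl⟩
  have hub : ∀ pb, 0 < c pb → ∀ r ∈ S, r ≤ -(d pb) / (c pb) := by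
    intro pb hcb r hr
    obtain ⟨u, hcu, hru⟩ := hr
    rw [hru, div_le_div_iff₀ (by linarith) hcb]
    nlinarith [cross u pb hcu hcb]
  have hbdd : BddAbove S := ⟨-(d b₀) / (c b₀), fun r hr => hub b₀ hcb₀ r hr⟩
  set m := sSup S with hm
  have key1 : ∀ u, c u < 0 → d u + m * c u ≤ 0 := by
    intro u hcu
    have : d u / (-(c u)) ≤ m := le_csSup hbdd ⟨u, hcu, rfl⟩
    rw [div_le_iff₀ (by linarith)] at this
    nlinarith
  have key2 : ∀ u, 0 < c u → d u + m * c u ≤ 0 := by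
    intro u hcu
    have : m ≤ -(d u) / (c u) := csSup_le hSne (hub u hcu)
    rw [le_div_iff₀ hcu] at this
    linarith
  have total : ∀ u, d u + m * c u ≤ 0 := by
    intro u
    rcases lt_trichotomy (c u) 0 with hh | hh | hh
    · exact key1 u hh
    · have := F0 u hh; rw [hh]; linarith
    · exact key2 u hh
  -- final contradiction
  have hne2 : ((-(y₁ - m * y₂), -(y₂ + m * y₁)) : ℝ × ℝ) ≠ (0, 0) := by
    intro heq
    rw [Prod.mk.injEq] at heq
    have e1 : y₁ = m * y₂ := by have := heq.1; linarith
    have e2 : y₂ = -(m * y₁) := by have := heq.2; linarith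
    rcases hyor with hh | hh
    · have e3 : y₁ = -(m * (m * y₁)) := by linear_combination e1 + m * e2
      have e4 := congrArg (fun z => z * y₁) e3
      nlinarith [mul_self_pos.mpr hh, sq_nonneg (m * y₁), e4]
    · have e3 : y₂ = -(m * (m * y₂)) := by linear_combination e2 - m * e1
      have e4 := congrArg (fun z => z * y₂) e3
      nlinarith [mul_self_pos.mpr hh, sq_nonneg (m * y₂), e4]
  obtain ⟨x, hx⟩ := hneg _ _ hne2
  have hval : 0 < d x + m * c x := by
    rw [hddef, hcdef]; simp only; nlinarith [hx]
  exact absurd (total x) (by linarith)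
end
end

section
/- Suppose M₁, M₂ ∈ S^n span ℝⁿ in the sense that span(range(M₁) ∪ range(M₂)) = ℝⁿ with n ≥ 4, and no nonzero linear combination α₁M₁ + α₂M₂ is positive semidefinite. Then there exist α₁, α₂ with rank(α₁M₁ + α₂M₂) ≥ 3. -/
open Matrix Set

noncomputable section

theorem stmt_19 {n : ℕ} (hn : 4 ≤ n) (M₁ M₂ : Matrix (Fin n) (Fin n) ℝ)
    (h₁ : M₁.IsSymm) (h₂ : M₂.IsSymm)
    (hspan : LinearMap.range M₁.mulVecLin ⊔ LinearMap.range M₂.mulVecLin = ⊤)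
    (h : ∀ α β : ℝ, (α, β) ≠ (0, 0) → ¬ (α • M₁ + β • M₂).PosSemidef) :
    ∃ α β : ℝ, 3 ≤ (α • M₁ + β • M₂).rank := by
  by_contra hcon
  push_neg at hcon
  have hr : ∀ α β : ℝ, (α • M₁ + β • M₂).rank ≤ 2 := fun α β =>
    Nat.lt_succ_iff.mp (hcon α β)
  have hr1 : M₁.rank ≤ 2 := by simpa using hr 1 0
  have hr2 : M₂.rank ≤ 2 := by simpa using hr 0 1
  set R₁ := LinearMap.range M₁.mulVecLin with hR₁
  set R₂ := LinearMap.range M₂.mulVecLin with hR₂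
  have hsum : Module.finrank ℝ ↥(R₁ ⊔ R₂) + Module.finrank ℝ ↥(R₁ ⊓ R₂)
      = Module.finrank ℝ ↥R₁ + Module.finrank ℝ ↥R₂ :=
    Submodule.finrank_sup_add_finrank_inf_eq R₁ R₂
  have htop : Module.finrank ℝ ↥(R₁ ⊔ R₂) = n := by
    rw [hspan, finrank_top]; simp
  have e1 : Module.finrank ℝ ↥R₁ = M₁.rank := rfl
  have e2 : Module.finrank ℝ ↥R₂ = M₂.rank := rfl
  have hle : n + Module.finrank ℝ ↥(R₁ ⊓ R₂) ≤ 4 := by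
    have h' := hsum
    rw [htop, e1, e2] at h'
    omega
  have hinf0 : Module.finrank ℝ ↥(R₁ ⊓ R₂) = 0 := by omega
  have hn4 : n = 4 := by omega
  have hinf : R₁ ⊓ R₂ = ⊥ := Submodule.finrank_eq_zero.mp hinf0
  -- key: kernel intersection trivial
  have hker : ∀ x : Fin n → ℝ, M₁.mulVec x = 0 → M₂.mulVec x = 0 → x = 0 := by
    intro x hx1 hx2
    have hx : x ∈ R₁ ⊔ R₂ := by rw [hspan]; trivial
    obtain ⟨a, ⟨u, hu⟩, b, ⟨v, hv⟩, hab⟩ := Submodule.mem_sup.mp hx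
    have hxx : x ⬝ᵥ x = 0 := by
      have hvm1 : M₁.vecMul x = 0 := by
        rw [← h₁.eq, vecMul_transpose]; exact hx1
      have hvm2 : M₂.vecMul x = 0 := by
        rw [← h₂.eq, vecMul_transpose]; exact hx2
      calc x ⬝ᵥ x = x ⬝ᵥ (a + b) := by rw [hab]
        _ = x ⬝ᵥ M₁.mulVec u + x ⬝ᵥ M₂.mulVec v := by
            rw [dotProduct_add, ← hu, ← hv]; rfl
        _ = 0 := by rw [dotProduct_mulVec, dotProduct_mulVec, hvm1, hvm2,
            zero_dotProduct, zero_dotProduct, add_zero]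
    exact dotProduct_self_eq_zero.mp hxx
  have hinj : LinearMap.ker (M₁ + M₂).mulVecLin = ⊥ := by
    rw [LinearMap.ker_eq_bot']
    intro x hx
    rw [mulVecLin_apply, add_mulVec] at hx
    have hmem : M₁.mulVec x ∈ R₁ ⊓ R₂ := by
      refine ⟨⟨x, rfl⟩, ?_⟩
      have : M₁.mulVec x = -(M₂.mulVec x) := by linear_combination (norm := module) hx
      rw [this]
      exact neg_mem ⟨x, rfl⟩
    rw [hinf, Submodule.mem_bot] at hmem
    have h2x : M₂.mulVec x = 0 := by
      rw [hmem, zero_add] at hx; exact hx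
    exact hker x hmem h2x
  have hrank4 : (M₁ + M₂).rank = n := by
    have := LinearMap.finrank_range_add_finrank_ker (M₁ + M₂).mulVecLin
    rw [hinj, finrank_bot, add_zero] at this
    simp at this
    exact this
  have := hr 1 1
  rw [one_smul, one_smul] at this
  omega
end
end
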